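/- arXiv:1011.3471 — 3 statements merged into one kernel-verified Lean document; each statement's English description precedes it below -/
import Mathlib

section
/- The cyclic dual of any para-cocyclic k-module is a para-cyclic k-module. That is, given a para-cocyclic module (C^•, δ_•, σ_•, τ_•), setting C_n := C^n, d_i := σ_{n-(i+1)} for 0 ≤ i < n, d_n := σ_{n-1} ∘ τ_n, s_i := δ_{n-(i+1)} for 0 ≤ i < n, and t_n := τ_n yields maps satisfying all para-cyclic relations (simplicial identities plus the compatibility of t with faces and degeneracies). -/
/-!
STATEMENT 2: The cyclic dual of any para-cocyclic `k`-module is a para-cyclic `k`-module.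

A para-cocyclic `k`-module is a cosimplicial `k`-module `(C^•, δ_•, σ_•)` together with
`k`-linear operators `τ_n : C^n → C^n` satisfying `τ_n ∘ δ_i = δ_{i-1} ∘ τ_{n-1}`
(`1 ≤ i ≤ n`), `τ_n ∘ δ_0 = δ_n`, `τ_n ∘ σ_i = σ_{i-1} ∘ τ_{n+1}` (`1 ≤ i ≤ n`) and
`τ_n ∘ σ_0 = σ_n ∘ τ_{n+1}²`.

We index cofaces as `δ n i : C n →ₗ[k] C (n+1)` (`0 ≤ i ≤ n+1`), codegeneracies as
`σ n i : C (n+1) →ₗ[k] C n` (`0 ≤ i ≤ n`), and `τ n : C n →ₗ[k] C n`.  Setting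
`C_n := C^n`, `d_i := σ_{n-(i+1)}` for `0 ≤ i < n`, `d_n := σ_{n-1} ∘ τ_n`,
`s_i := δ_{n-(i+1)}` for `0 ≤ i < n`, and `t_n := τ_n`, the resulting data
`(C_•, d_•, s_•, t_•)` satisfies all para-cyclic relations.
-/

open Classical in
/-- The faces of the cyclic dual: `d n i : C (n+1) → C n` is `σ_{n-i}` for `i ≤ n`
and `σ_n ∘ τ_{n+1}` for `i = n+1`. -/
noncomputable def dualFace {k : Type*} [CommRing k] {C : ℕ → Type*}
    [∀ n, AddCommGroup (C n)] [∀ n, Module k (C n)]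
    (σ : ∀ n : ℕ, ℕ → (C (n + 1) →ₗ[k] C n))
    (τ : ∀ n : ℕ, C n →ₗ[k] C n) (n i : ℕ) : C (n + 1) →ₗ[k] C n :=
  if i = n + 1 then (σ n n).comp (τ (n + 1)) else σ n (n - i)

/-- The degeneracies of the cyclic dual: `s n i : C n → C (n+1)` is `δ_{n-i}` for `i ≤ n`. -/
noncomputable def dualDegen {k : Type*} [CommRing k] {C : ℕ → Type*}
    [∀ n, AddCommGroup (C n)] [∀ n, Module k (C n)]
    (δ : ∀ n : ℕ, ℕ → (C n →ₗ[k] C (n + 1))) (n i : ℕ) : C n →ₗ[k] C (n + 1) :=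
  δ n (n - i)

theorem cyclicDual_is_paraCyclic
    (k : Type*) [CommRing k]
    (C : ℕ → Type*) [∀ n, AddCommGroup (C n)] [∀ n, Module k (C n)]
    (δ : ∀ n : ℕ, ℕ → (C n →ₗ[k] C (n + 1)))
    (σ : ∀ n : ℕ, ℕ → (C (n + 1) →ₗ[k] C n))
    (τ : ∀ n : ℕ, C n →ₗ[k] C n)
    -- cosimplicial identities
    (hδδ : ∀ n i j, i < j → j ≤ n + 2 →
      (δ (n + 1) j).comp (δ n i) = (δ (n + 1) i).comp (δ n (j - 1)))
    (hσσ : ∀ n i j, i ≤ j → j ≤ n →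
      (σ n j).comp (σ (n + 1) i) = (σ n i).comp (σ (n + 1) (j + 1)))
    (hσδ₁ : ∀ n i j, i < j → j ≤ n + 1 →
      (σ (n + 1) j).comp (δ (n + 1) i) = (δ n i).comp (σ n (j - 1)))
    (hσδ₂ : ∀ n j, j ≤ n →
      (σ n j).comp (δ n j) = LinearMap.id ∧
      (σ n j).comp (δ n (j + 1)) = LinearMap.id)
    (hσδ₃ : ∀ n i j, j + 1 < i → i ≤ n + 2 →
      (σ (n + 1) j).comp (δ (n + 1) i) = (δ n (i - 1)).comp (σ n j))
    -- para-cocyclic identities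
    (hτδ : ∀ n i, 1 ≤ i → i ≤ n + 1 →
      (τ (n + 1)).comp (δ n i) = (δ n (i - 1)).comp (τ n))
    (hτδ₀ : ∀ n, (τ (n + 1)).comp (δ n 0) = δ n (n + 1))
    (hτσ : ∀ n i, 1 ≤ i → i ≤ n →
      (τ n).comp (σ n i) = (σ n (i - 1)).comp (τ (n + 1)))
    (hτσ₀ : ∀ n, (τ n).comp (σ n 0) = (σ n n).comp ((τ (n + 1)).comp (τ (n + 1)))) :
    -- conclusion: the cyclic dual is a para-cyclic module
    -- (1) simplicial face relations
    (∀ n i j, i < j → j ≤ n + 2 →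
      (dualFace σ τ n i).comp (dualFace σ τ (n + 1) j) =
        (dualFace σ τ n (j - 1)).comp (dualFace σ τ (n + 1) i)) ∧
    -- (2) simplicial degeneracy relations
    (∀ n i j, i ≤ j → j ≤ n →
      (dualDegen δ (n + 1) i).comp (dualDegen δ n j) =
        (dualDegen δ (n + 1) (j + 1)).comp (dualDegen δ n i)) ∧
    -- (3) mixed relations
    (∀ n i j, i < j → j ≤ n + 1 →
      (dualFace σ τ (n + 1) i).comp (dualDegen δ (n + 1) j) =
        (dualDegen δ n (j - 1)).comp (dualFace σ τ n i)) ∧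
    (∀ n j, j ≤ n + 1 →
      (dualFace σ τ (n + 1) j).comp (dualDegen δ (n + 1) j) = LinearMap.id ∧
      (dualFace σ τ (n + 1) (j + 1)).comp (dualDegen δ (n + 1) j) = LinearMap.id) ∧
    (∀ n i j, j + 1 < i → i ≤ n + 2 →
      (dualFace σ τ (n + 1) i).comp (dualDegen δ (n + 1) j) =
        (dualDegen δ n j).comp (dualFace σ τ n (i - 1))) ∧
    -- (4) compatibility of `t := τ` with faces
    (∀ n i, 1 ≤ i → i ≤ n + 1 →
      (dualFace σ τ n i).comp (τ (n + 1)) = (τ n).comp (dualFace σ τ n (i - 1))) ∧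
    (∀ n, (dualFace σ τ n 0).comp (τ (n + 1)) = dualFace σ τ n (n + 1)) ∧
    -- (5) compatibility of `t := τ` with degeneracies
    (∀ n i, 1 ≤ i → i ≤ n →
      (dualDegen δ n i).comp (τ n) = (τ (n + 1)).comp (dualDegen δ n (i - 1))) ∧
    (∀ n, (dualDegen δ n 0).comp (τ n) =
      ((τ (n + 1)).comp (τ (n + 1))).comp (dualDegen δ n n)) := by

  refine ⟨?_, ?_, ?_, ?_, ?_, ?_, ?_, ?_, ?_⟩
  · -- (1) simplicial face relations
    intro n i j hij hj
    unfold dualFace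
    rcases Nat.lt_or_ge j (n + 2) with hj' | hj'
    · have hi : i ≤ n := by omega
      rw [if_neg (by omega), if_neg (by omega), if_neg (by omega), if_neg (by omega)]
      have h := hσσ n (n + 1 - j) (n - i) (by omega) (by omega)
      rw [show n - (j - 1) = n + 1 - j from by omega,
        show n + 1 - i = n - i + 1 from by omega]
      exact h
    · have hj2 : j = n + 2 := by omega
      subst hj2
      rcases Nat.lt_or_ge i (n + 1) with hi | hi
      · rw [if_pos rfl, if_neg (by omega), if_pos (by omega), if_neg (by omega)]
        have h1 := hτσ (n + 1) (n + 1 - i) (by omega) (by omega)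
        have h2 := hσσ n (n - i) n (by omega) (le_refl n)
        calc ((σ n (n - i)).comp ((σ (n + 1) (n + 1)).comp (τ (n + 2))))
            = ((σ n (n - i)).comp (σ (n + 1) (n + 1))).comp (τ (n + 2)) := by
              rw [LinearMap.comp_assoc]
          _ = ((σ n n).comp (σ (n + 1) (n - i))).comp (τ (n + 2)) := by rw [h2]
          _ = (σ n n).comp ((σ (n + 1) (n - i)).comp (τ (n + 2))) := by
              rw [LinearMap.comp_assoc]
          _ = (σ n n).comp ((τ (n + 1)).comp (σ (n + 1) (n + 1 - i))) := by
              rw [show n - i = n + 1 - i - 1 from by omega, ← h1]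
          _ = ((σ n n).comp (τ (n + 1))).comp (σ (n + 1) (n + 1 - i)) := by
              rw [LinearMap.comp_assoc]
      · have hi2 : i = n + 1 := by omega
        subst hi2
        rw [if_pos rfl, if_pos rfl, if_pos (show n + 2 - 1 = n + 1 from rfl),
          if_neg (show ¬(n + 1 = n + 1 + 1) by omega)]
        have h0 := hτσ₀ (n + 1)
        have h1 := hτσ (n + 1) (n + 1) (by omega) (le_refl _)
        have h2 := hσσ n n n (le_refl n) (le_refl n)
        rw [show n + 1 - (n + 1) = 0 from by omega]
        rw [show n + 1 - 1 = n from rfl] at h1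
        calc ((σ n n).comp (τ (n + 1))).comp ((σ (n + 1) (n + 1)).comp (τ (n + 2)))
            = (σ n n).comp (((τ (n + 1)).comp (σ (n + 1) (n + 1))).comp (τ (n + 2))) := by
              simp only [LinearMap.comp_assoc]
          _ = (σ n n).comp (((σ (n + 1) n).comp (τ (n + 2))).comp (τ (n + 2))) := by
              rw [h1]
          _ = ((σ n n).comp (σ (n + 1) n)).comp ((τ (n + 2)).comp (τ (n + 2))) := by
              simp only [LinearMap.comp_assoc]
          _ = ((σ n n).comp (σ (n + 1) (n + 1))).comp ((τ (n + 2)).comp (τ (n + 2))) := by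
              rw [h2]
          _ = ((σ n n).comp (τ (n + 1))).comp (σ (n + 1) 0) := by
              simp only [LinearMap.comp_assoc]
              rw [h0]
  · -- (2) simplicial degeneracy relations
    intro n i j hij hj
    unfold dualDegen
    have h := hδδ n (n - j) (n + 1 - i) (by omega) (by omega)
    rw [show n + 1 - i - 1 = n - i from by omega] at h
    rw [show n + 1 - (j + 1) = n - j from by omega]
    exact h
  · -- (3) mixed, i < j
    intro n i j hij hj
    unfold dualFace dualDegen
    rw [if_neg (by omega), if_neg (by omega)]
    have h := hσδ₁ n (n + 1 - j) (n + 1 - i) (by omega) (by omega)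
    rw [show n + 1 - i - 1 = n - i from by omega] at h
    rw [show n - (j - 1) = n + 1 - j from by omega]
    exact h
  · -- (4) d_j s_j = id = d_{j+1} s_j
    intro n j hj
    unfold dualFace dualDegen
    constructor
    · rw [if_neg (by omega)]
      exact (hσδ₂ (n + 1) (n + 1 - j) (by omega)).1
    · rcases Nat.lt_or_ge j (n + 1) with hj' | hj'
      · rw [if_neg (by omega)]
        have h := (hσδ₂ (n + 1) (n + 1 - (j + 1)) (by omega)).2
        rw [show n + 1 - (j + 1) + 1 = n + 1 - j from by omega] at h
        exact h
      · have hj2 : j = n + 1 := by omega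
        subst hj2
        rw [if_pos rfl, show n + 1 - (n + 1) = 0 from by omega]
        have h0 := hτδ₀ (n + 1)
        have h := (hσδ₂ (n + 1) (n + 1) (le_refl _)).2
        rw [LinearMap.comp_assoc, h0]
        exact h
  · -- (5) mixed, j + 1 < i
    intro n i j hij hi
    unfold dualFace dualDegen
    have hjn : j ≤ n := by omega
    rcases Nat.lt_or_ge i (n + 2) with hi' | hi'
    · rw [if_neg (by omega), if_neg (by omega)]
      have h := hσδ₃ n (n + 1 - j) (n + 1 - i) (by omega) (by omega)
      rw [show n + 1 - j - 1 = n - j from by omega] at h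
      rw [show n - (i - 1) = n + 1 - i from by omega]
      exact h
    · have hi2 : i = n + 2 := by omega
      subst hi2
      rw [if_pos rfl, if_pos (by omega)]
      have h1 := hτδ (n + 1) (n + 1 - j) (by omega) (by omega)
      rw [show n + 1 - j - 1 = n - j from by omega] at h1
      have h2 := hσδ₁ n (n - j) (n + 1) (by omega) (le_refl _)
      rw [show n + 1 - 1 = n from by omega] at h2
      calc ((σ (n + 1) (n + 1)).comp (τ (n + 2))).comp (δ (n + 1) (n + 1 - j))
          = (σ (n + 1) (n + 1)).comp ((τ (n + 2)).comp (δ (n + 1) (n + 1 - j))) := by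
            rw [LinearMap.comp_assoc]
        _ = (σ (n + 1) (n + 1)).comp ((δ (n + 1) (n - j)).comp (τ (n + 1))) := by rw [h1]
        _ = ((σ (n + 1) (n + 1)).comp (δ (n + 1) (n - j))).comp (τ (n + 1)) := by
            rw [LinearMap.comp_assoc]
        _ = ((δ n (n - j)).comp (σ n n)).comp (τ (n + 1)) := by rw [h2]
        _ = (δ n (n - j)).comp ((σ n n).comp (τ (n + 1))) := by rw [LinearMap.comp_assoc]
  · -- (6) t with faces, 1 ≤ i
    intro n i hi1 hi
    unfold dualFace
    rcases Nat.lt_or_ge i (n + 1) with hi' | hi'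
    · rw [if_neg (by omega), if_neg (by omega)]
      have h := hτσ n (n + 1 - i) (by omega) (by omega)
      rw [show n + 1 - i - 1 = n - i from by omega] at h
      rw [show n - (i - 1) = n + 1 - i from by omega]
      exact h.symm
    · have hi2 : i = n + 1 := by omega
      subst hi2
      rw [if_pos rfl, if_neg (by omega), show n - (n + 1 - 1) = 0 from by omega]
      rw [LinearMap.comp_assoc]
      exact (hτσ₀ n).symm
  · -- (7) d_0 ∘ t = d_{n+1}
    intro n
    unfold dualFace
    rw [if_neg (by omega), if_pos rfl, Nat.sub_zero]
  · -- (8) t with degeneracies, 1 ≤ i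
    intro n i hi1 hi
    unfold dualDegen
    have h := hτδ n (n + 1 - i) (by omega) (by omega)
    rw [show n + 1 - i - 1 = n - i from by omega] at h
    rw [show n - (i - 1) = n + 1 - i from by omega]
    exact h.symm
  · -- (9) s_0 ∘ t = t² ∘ s_n
    intro n
    unfold dualDegen
    rw [Nat.sub_zero, Nat.sub_self]
    have h0 := hτδ₀ n
    have h1 := hτδ n (n + 1) (by omega) (le_refl _)
    rw [show n + 1 - 1 = n from by omega] at h1
    rw [LinearMap.comp_assoc, h0, h1]
end

section
/- Let g be a Lie algebra over a field k of characteristic 0. The antisymmetrization map Ξ : M ⊗ Λ^n g → U(g)^{⊗n} ⊗ M, sending m ⊗ X_1 ∧ ⋯ ∧ X_n to (1/n!) Σ_{σ ∈ S_n} sgn(σ) X_{σ(1)} ⊗ ⋯ ⊗ X_{σ(n)} ⊗ m, is injective and lands in the kernel of the Hochschild-type coboundary b of the cocyclic module C^•(U(g), M) with trivial coaction; in particular Ξ identifies M ⊗ Λ^• g with the degree-wise cohomology H^•(U(g), M) of the cosimplicial module when M is flat. -/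
set_option linter.unusedSectionVars false
set_option maxHeartbeats 1000000


/-!
STATEMENT 17: Let `g` be a Lie algebra over a field `k` of characteristic `0`, and
`U = U(g)` its universal enveloping algebra (with its canonical coproduct, for which the
generators are primitive, and counit).  Let `M` be a right `U`-module, viewed as a left
`U`-comodule via the trivial coaction `m ↦ 1 ⊗ m`.  The antisymmetrisation map
`Ξ : M ⊗ Λⁿg → U^{⊗n} ⊗ M`,
`m ⊗ X₁ ∧ ⋯ ∧ Xₙ ↦ (1/n!) Σ_{σ ∈ Sₙ} sgn(σ) X_{σ(1)} ⊗ ⋯ ⊗ X_{σ(n)} ⊗ m`,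
is injective and lands in the kernel of the Hochschild-type coboundary
`b = Σ (-1)ⁱ δᵢ` of the cocyclic module `C^•(U, M)`; in particular (with `M` flat) it
identifies `M ⊗ Λ^•g` with the degreewise cohomology `H^•(U, M)` of the cosimplicial
module.

Tensor powers are modelled recursively (`UPow 0 = k`, `UPow (n+1) = U ⊗ UPow n`), the
cofaces are `δ₀` (insert `1` in front), `δᵢ` (apply `Δ` in slot `i`, `1 ≤ i ≤ n`), and
`δ_{n+1}` (insert `1` at the end, coming from the trivial coaction), and `Λⁿg` is the
`n`-th exterior power `⋀[k]^n g` of `g`.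
-/

open TensorProduct

universe u

variable (k g : Type u) [Field k] [CharZero k] [LieRing g] [LieAlgebra k g]

/-- `U(g)`. -/
abbrev UEnv := UniversalEnvelopingAlgebra k g

/-- `UPow n ≅ U(g)^{⊗n}` (as an object of `ModuleCat k`). -/
noncomputable def UPow : ℕ → ModuleCat.{u} k
  | 0 => ModuleCat.of k k
  | n + 1 => ModuleCat.of k (UEnv k g ⊗[k] UPow n)

/-- Insert `1` as a new first tensor factor. -/
noncomputable def insFront (n : ℕ) : UPow k g n →ₗ[k] UPow k g (n + 1) :=
  (TensorProduct.mk k (UEnv k g) (UPow k g n) 1 :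
    UPow k g n →ₗ[k] UEnv k g ⊗[k] UPow k g n)

/-- Insert `1` as a new last tensor factor. -/
noncomputable def insBack : ∀ n : ℕ, UPow k g n →ₗ[k] UPow k g (n + 1)
  | 0 => (TensorProduct.mk k (UEnv k g) k 1 : k →ₗ[k] UEnv k g ⊗[k] k)
  | n + 1 => (LinearMap.lTensor (UEnv k g) (insBack n) :
      UEnv k g ⊗[k] UPow k g n →ₗ[k] UEnv k g ⊗[k] UPow k g (n + 1))

variable (Δ : UEnv k g →ₗ[k] UEnv k g ⊗[k] UEnv k g)

/-- Apply the coproduct `Δ` in slot `j` (slots numbered from `0`). -/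
noncomputable def comulAt : ∀ n : ℕ, ℕ → (UPow k g n →ₗ[k] UPow k g (n + 1))
  | 0, _ => (TensorProduct.mk k (UEnv k g) k 1 : k →ₗ[k] UEnv k g ⊗[k] k)
  | n + 1, 0 =>
      ((TensorProduct.assoc k (UEnv k g) (UEnv k g) (UPow k g n)).toLinearMap ∘ₗ
        (LinearMap.rTensor (UPow k g n) Δ :
          UEnv k g ⊗[k] UPow k g n →ₗ[k] (UEnv k g ⊗[k] UEnv k g) ⊗[k] UPow k g n))
  | n + 1, j + 1 =>
      (LinearMap.lTensor (UEnv k g) (comulAt n j) :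
        UEnv k g ⊗[k] UPow k g n →ₗ[k] UEnv k g ⊗[k] UPow k g (n + 1))

variable (M : Type u) [AddCommGroup M] [Module k M]
  [Module (UEnv k g)ᵐᵒᵖ M] [IsScalarTower k (UEnv k g)ᵐᵒᵖ M]

open Classical in
/-- The cofaces of `C^•(U(g), M) = U(g)^{⊗•} ⊗ M` with trivial coaction on `M`:
`δ₀` inserts `1` in front, `δᵢ` applies `Δ` in slot `i` (`1 ≤ i ≤ n`), and `δ_{n+1}`
inserts `1` at the end. -/
noncomputable def coface (n i : ℕ) : UPow k g n ⊗[k] M →ₗ[k] UPow k g (n + 1) ⊗[k] M :=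
  if i = 0 then LinearMap.rTensor M (insFront k g n)
  else if i ≤ n then LinearMap.rTensor M (comulAt k g Δ n (i - 1))
  else LinearMap.rTensor M (insBack k g n)

/-- The Hochschild-type coboundary `b = Σ_{i=0}^{n+1} (-1)ⁱ δᵢ`. -/
noncomputable def bCoboundary (n : ℕ) :
    UPow k g n ⊗[k] M →ₗ[k] UPow k g (n + 1) ⊗[k] M :=
  ∑ i ∈ Finset.range (n + 2), ((-1 : ℤ) ^ i) • coface k g Δ M n i

/-- The elementary tensor `f 0 ⊗ f 1 ⊗ ⋯ ⊗ f (n-1)` in `UPow n`. -/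
noncomputable def tpow : ∀ n : ℕ, (Fin n → UEnv k g) → UPow k g n
  | 0, _ => (1 : k)
  | n + 1, f =>
      (show UEnv k g ⊗[k] UPow k g n from (f 0) ⊗ₜ[k] (tpow n (Fin.tail f)))



section PBWInst

attribute [local instance 100] LieRing.ofAssociativeRing

namespace PBWProof

open Finsupp

variable {k : Type u} {g : Type u} [Field k] [LieRing g] [LieAlgebra k g]
variable {ι : Type u} [LinearOrder ι]

abbrev Mon (ι : Type u) := ι →₀ ℕ
abbrev V (k ι : Type u) [Field k] : Type u := (Mon ι) →₀ k

noncomputable def z (m : Mon ι) : V k ι := Finsupp.single m 1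

def deg (m : Mon ι) : ℕ := m.sum fun _ e => e

def mlb (b : ι) (m : Mon ι) : Prop := ∀ a ∈ m.support, b ≤ a

instance (b : ι) (m : Mon ι) : Decidable (mlb b m) :=
  Finset.decidableDforallFinset

lemma deg_add (m m' : Mon ι) : deg (m + m') = deg m + deg m' :=
  Finsupp.sum_add_index' (fun _ => rfl) (fun _ _ _ => rfl)

@[simp] lemma deg_single (b : ι) (e : ℕ) : deg (Finsupp.single b e) = e := by
  simp [deg, Finsupp.sum_single_index]

@[simp] lemma deg_zero : deg (0 : Mon ι) = 0 := by simp [deg]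

lemma deg_pos {m : Mon ι} (h : m ≠ 0) : 0 < deg m := by
  obtain ⟨a, ha⟩ := Finsupp.support_nonempty_iff.2 h
  have h1 : 1 ≤ m a := Nat.one_le_iff_ne_zero.2 (Finsupp.mem_support_iff.1 ha)
  calc 0 < m a := h1
  _ ≤ deg m := Finset.single_le_sum (f := fun a => m a) (fun _ _ => Nat.zero_le _) ha

lemma mlb_of_deg_zero {b : ι} {m : Mon ι} (h : deg m = 0) : mlb b m := by
  intro a ha
  have := deg_pos (m := m) (fun h0 => by simp [h0] at ha)
  omega

lemma sub_single_add {m : Mon ι} {d : ι} (hd : d ∈ m.support) :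
    (m - Finsupp.single d 1) + Finsupp.single d 1 = m := by
  ext a
  rcases eq_or_ne a d with rfl | hne
  · have : 1 ≤ m a := Nat.one_le_iff_ne_zero.2 (Finsupp.mem_support_iff.1 hd)
    simp [Finsupp.sub_apply]
    omega
  · simp [Finsupp.sub_apply, Finsupp.single_apply, (Ne.symm hne : d ≠ a)]

lemma deg_sub_single {m : Mon ι} {d : ι} (hd : d ∈ m.support) :
    deg (m - Finsupp.single d 1) + 1 = deg m := by
  conv_rhs => rw [← sub_single_add hd]
  rw [deg_add, deg_single]

/-- minimum of the support, with default -/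
noncomputable def dmin (m : Mon ι) (x : ι) : ι := WithTop.untopD x m.support.min

lemma dmin_eq_min' {m : Mon ι} (h : m.support.Nonempty) (x : ι) :
    dmin m x = m.support.min' h := by
  rw [dmin, ← Finset.coe_min' h, WithTop.untopD_coe]

lemma dmin_mem {m : Mon ι} (h : m.support.Nonempty) (x : ι) : dmin m x ∈ m.support := by
  rw [dmin_eq_min' h]; exact Finset.min'_mem _ _

lemma dmin_le {m : Mon ι} (h : m.support.Nonempty) (x : ι) {a : ι} (ha : a ∈ m.support) :
    dmin m x ≤ a := by
  rw [dmin_eq_min' h]; exact Finset.min'_le _ _ ha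

lemma not_mlb_witness {b : ι} {m : Mon ι} (h : ¬ mlb b m) :
    ∃ a ∈ m.support, a < b := by
  simp only [mlb, not_forall] at h
  obtain ⟨a, ha, hab⟩ := h
  exact ⟨a, ha, lt_of_not_ge hab⟩

lemma support_nonempty_of_not_mlb {b : ι} {m : Mon ι} (h : ¬ mlb b m) :
    m.support.Nonempty := by
  obtain ⟨a, ha, _⟩ := not_mlb_witness h
  exact ⟨a, ha⟩

lemma dmin_lt_of_not_mlb {b : ι} {m : Mon ι} (h : ¬ mlb b m) (x : ι) :
    dmin m x < b := by
  obtain ⟨a, ha, hab⟩ := not_mlb_witness h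
  exact lt_of_le_of_lt (dmin_le (support_nonempty_of_not_mlb h) x ha) hab

/-- The approximations to the PBW action of basis vectors on monomials. -/
noncomputable def Lup (B : Module.Basis ι k g) : ℕ → ι → Mon ι → V k ι
  | 0, b, m => z (m + Finsupp.single b 1)
  | n+1, b, m =>
    if mlb b m then z (m + Finsupp.single b 1)
    else if deg m ≤ n then Lup B n b m
    else
      z (m + Finsupp.single b 1)
        + Finsupp.linearCombination k (Lup B n (dmin m b))
            (Lup B n b (m - Finsupp.single (dmin m b) 1)
              - z ((m - Finsupp.single (dmin m b) 1) + Finsupp.single b 1))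
        + Finsupp.linearCombination k
            (fun a => Lup B n a (m - Finsupp.single (dmin m b) 1))
            (B.repr ⁅B b, B (dmin m b)⁆)

noncomputable def L (B : Module.Basis ι k g) (b : ι) (m : Mon ι) : V k ι := Lup B (deg m) b m

lemma lup_mlb (B : Module.Basis ι k g) {b : ι} {m : Mon ι} (h : mlb b m) (n : ℕ) :
    Lup B n b m = z (m + Finsupp.single b 1) := by
  cases n with
  | zero => rfl
  | succ n => rw [Lup, if_pos h]

lemma lup_eq_L (B : Module.Basis ι k g) : ∀ n (b : ι) (m : Mon ι), deg m ≤ n →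
    Lup B n b m = L B b m := by
  intro n
  induction n with
  | zero => intro b m hm; rw [L, Nat.le_zero.1 hm]
  | succ n IH =>
    intro b m hm
    by_cases hmlb : mlb b m
    · rw [lup_mlb B hmlb, L, lup_mlb B hmlb]
    · rcases le_or_gt (deg m) n with h | h
      · rw [Lup, if_neg hmlb, if_pos h, IH b m h]
      · have : deg m = n + 1 := le_antisymm hm h
        rw [L, this]

lemma L_mlb (B : Module.Basis ι k g) {b : ι} {m : Mon ι} (h : mlb b m) :
    L B b m = z (m + Finsupp.single b 1) := lup_mlb B h _

lemma L_zero (B : Module.Basis ι k g) (b : ι) : L B b 0 = z (Finsupp.single b 1) := by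
  rw [L_mlb B (by intro a ha; simp at ha), zero_add]

/-- submodule of elements supported in degrees ≤ t -/
noncomputable def Wle (k : Type u) [Field k] (t : ℕ) : Submodule k (V k ι) :=
  Finsupp.supported k k {w : Mon ι | deg w ≤ t}

lemma z_mem_Wle {t : ℕ} {w : Mon ι} (h : deg w ≤ t) : z w ∈ Wle k t := by
  rw [Wle, Finsupp.mem_supported, z, Finsupp.support_single_ne_zero _ one_ne_zero]
  simpa using h

lemma Wle_mono {t t' : ℕ} (h : t ≤ t') : Wle k (ι := ι) t ≤ Wle k t' :=
  Finsupp.supported_mono (fun w hw => le_trans hw h)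

lemma mem_Wle_iff {t : ℕ} {v : V k ι} :
    v ∈ Wle k t ↔ ∀ w ∈ v.support, deg w ≤ t := by
  rw [Wle, Finsupp.mem_supported]
  constructor
  · intro h w hw; exact h hw
  · intro h w hw; exact h w hw

lemma LC_z (F : Mon ι → V k ι) (w : Mon ι) :
    Finsupp.linearCombination k F (z w) = F w := by
  rw [z, Finsupp.linearCombination_single, one_smul]

lemma LC_mem {α : Type u} {F : α → V k ι} {v : α →₀ k} {s : Submodule k (V k ι)}
    (hv : ∀ w ∈ v.support, F w ∈ s) :
    Finsupp.linearCombination k F v ∈ s := by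
  rw [Finsupp.linearCombination_apply]
  exact Submodule.finsuppSum_mem _ _ _ _
    (fun w hw => Submodule.smul_mem _ _ (hv w (Finsupp.mem_support_iff.2 hw)))

lemma LC_congr_on_Wle {t : ℕ} {F G : Mon ι → V k ι}
    (hFG : ∀ w, deg w ≤ t → F w = G w) {v : V k ι} (hv : v ∈ Wle k t) :
    Finsupp.linearCombination k F v = Finsupp.linearCombination k G v := by
  rw [Wle, Finsupp.supported_eq_span_single] at hv
  induction hv using Submodule.span_induction with
  | mem x hx =>
    obtain ⟨w, hw, rfl⟩ := hx
    dsimp only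
    rw [show Finsupp.single w (1:k) = z w from rfl, LC_z, LC_z]
    exact hFG w hw
  | zero => simp
  | add x y _ _ hx hy => simp [map_add, hx, hy]
  | smul c x _ hx => simp [map_smul, hx]

/-- leading term lemma -/
lemma L_sub_lead_mem (B : Module.Basis ι k g) :
    ∀ n (m : Mon ι) (b : ι), deg m ≤ n →
      L B b m - z (m + Finsupp.single b 1) ∈ Wle k (deg m) := by
  intro n
  induction n with
  | zero =>
    intro m b hm
    rw [L_mlb B (mlb_of_deg_zero (Nat.le_zero.1 hm)), sub_self]
    exact Submodule.zero_mem _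
  | succ n IH =>
    intro m b hm
    by_cases hmlb : mlb b m
    · rw [L_mlb B hmlb, sub_self]; exact Submodule.zero_mem _
    rcases le_or_gt (deg m) n with h | h
    · exact IH m b h
    have hdeg : deg m = n + 1 := le_antisymm hm h
    have hne := support_nonempty_of_not_mlb hmlb
    set d := dmin m b with hd
    set m' := m - Finsupp.single d 1 with hm'
    have hdm : deg m' = n := by
      have h2 := deg_sub_single (dmin_mem hne b)
      rw [← hd, ← hm'] at h2
      omega
    have hL : L B b m = Lup B (n+1) b m := by rw [L, hdeg]
    rw [hL, Lup, if_neg hmlb, if_neg (by omega)]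
    have e1 : Lup B n b m' = L B b m' := lup_eq_L B n b m' (le_of_eq hdm)
    rw [← hd, ← hm', e1]
    have hdiff : L B b m' - z (m' + Finsupp.single b 1) ∈ Wle k n := by
      have := IH m' b (le_of_eq hdm); rwa [hdm] at this
    have key : ∀ w ∈ (L B b m' - z (m' + Finsupp.single b 1)).support, deg w ≤ n :=
      mem_Wle_iff.1 hdiff
    rw [hdeg]
    have hz : z (m + Finsupp.single b 1) +
        Finsupp.linearCombination k (Lup B n d)
          (L B b m' - z (m' + Finsupp.single b 1)) +
        Finsupp.linearCombination k (fun a => Lup B n a m') (B.repr ⁅B b, B d⁆)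
        - z (m + Finsupp.single b 1)
        = Finsupp.linearCombination k (Lup B n d)
            (L B b m' - z (m' + Finsupp.single b 1)) +
          Finsupp.linearCombination k (fun a => Lup B n a m') (B.repr ⁅B b, B d⁆) := by
      abel
    rw [hz]
    apply Submodule.add_mem
    · apply LC_mem
      intro w hw
      have hdw : deg w ≤ n := key w hw
      rw [lup_eq_L B n d w hdw]
      have h1 : L B d w - z (w + Finsupp.single d 1) ∈ Wle k (deg w) := IH w d hdw
      have h2 : L B d w = (L B d w - z (w + Finsupp.single d 1)) + z (w + Finsupp.single d 1) := by abel
      rw [h2]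
      apply Submodule.add_mem
      · exact Wle_mono (by omega) h1
      · exact z_mem_Wle (by rw [deg_add, deg_single]; omega)
    · apply LC_mem
      intro a _
      rw [lup_eq_L B n a m' (le_of_eq hdm)]
      have h1 : L B a m' - z (m' + Finsupp.single a 1) ∈ Wle k (deg m') := IH m' a (le_of_eq hdm)
      have h2 : L B a m' = (L B a m' - z (m' + Finsupp.single a 1)) + z (m' + Finsupp.single a 1) := by abel
      rw [h2]
      apply Submodule.add_mem
      · exact Wle_mono (by omega) h1
      · exact z_mem_Wle (by rw [deg_add, deg_single]; omega)

lemma L_mem_Wle (B : Module.Basis ι k g) (m : Mon ι) (b : ι) :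
    L B b m ∈ Wle k (deg m + 1) := by
  have h1 := L_sub_lead_mem B (deg m) m b le_rfl
  have h2 : L B b m = (L B b m - z (m + Finsupp.single b 1)) + z (m + Finsupp.single b 1) := by abel
  rw [h2]
  exact Submodule.add_mem _ (Wle_mono (by omega) h1)
    (z_mem_Wle (by rw [deg_add, deg_single]))


lemma mlb_of_le {d : ι} {m : Mon ι} (hle : ∀ a ∈ m.support, d ≤ a) : mlb d m := hle

lemma mlb_add_single {d b : ι} {m : Mon ι} (h1 : mlb d m) (h2 : d ≤ b) :
    mlb d (m + Finsupp.single b 1) := by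
  intro a ha
  rcases Finset.mem_union.1 (Finsupp.support_add ha) with h | h
  · exact h1 a h
  · rw [Finset.mem_singleton.1 (Finsupp.support_single_subset h)]; exact h2

lemma mlb_sub {d : ι} {m : Mon ι} (h : mlb d m) (w : Mon ι) : mlb d (m - w) :=
  fun a ha => h a (Finsupp.support_tsub ha)

lemma L4 (B : Module.Basis ι k g) {b : ι} {m : Mon ι} (hmlb : ¬ mlb b m) :
    L B b m =
      Finsupp.linearCombination k (L B (dmin m b)) (L B b (m - Finsupp.single (dmin m b) 1))
      + Finsupp.linearCombination k
          (fun a => L B a (m - Finsupp.single (dmin m b) 1))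
          (B.repr ⁅B b, B (dmin m b)⁆) := by
  have hne := support_nonempty_of_not_mlb hmlb
  set d := dmin m b with hd
  set m' := m - Finsupp.single d 1 with hm'
  have hdmem : d ∈ m.support := by rw [hd]; exact dmin_mem hne b
  have hadd : m' + Finsupp.single d 1 = m := sub_single_add hdmem
  have hdm1 : deg m' + 1 = deg m := by
    have h2 := deg_sub_single hdmem
    rw [← hm'] at h2; exact h2
  obtain ⟨n, hdeg⟩ : ∃ n, deg m = n + 1 := ⟨deg m', hdm1.symm⟩
  have hdm : deg m' = n := by omega
  have hdb : d < b := by rw [hd]; exact dmin_lt_of_not_mlb hmlb b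
  have hmlbd : mlb d m' := by
    intro a ha
    rw [hd]; exact dmin_le hne b (Finsupp.support_tsub (by rw [← hm']; exact ha))
  rw [show L B b m = Lup B (n+1) b m by rw [L, hdeg], Lup, if_neg hmlb,
    if_neg (by omega), ← hd, ← hm']
  rw [lup_eq_L B n b m' (le_of_eq hdm)]
  have hdiff : L B b m' - z (m' + Finsupp.single b 1) ∈ Wle k n := by
    have h2 := L_sub_lead_mem B n m' b (le_of_eq hdm); rwa [hdm] at h2
  rw [LC_congr_on_Wle (fun w hw => lup_eq_L B n d w hw) hdiff]
  rw [show (Finsupp.linearCombination k fun a => Lup B n a m')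
      = (Finsupp.linearCombination k fun a => L B a m') by
    congr 1; funext a; exact lup_eq_L B n a m' (le_of_eq hdm)]
  have hz : Finsupp.linearCombination k (L B d) (z (m' + Finsupp.single b 1))
      = z (m + Finsupp.single b 1) := by
    rw [LC_z, L_mlb B (mlb_add_single hmlbd (le_of_lt hdb))]
    congr 1
    rw [add_right_comm, hadd]
  rw [map_sub, hz]
  abel

noncomputable def Amap (B : Module.Basis ι k g) : g →ₗ[k] (V k ι) →ₗ[k] (V k ι) :=
  B.constr k fun b => Finsupp.linearCombination k (L B b)

lemma Amap_basis (B : Module.Basis ι k g) (b : ι) :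
    Amap B (B b) = Finsupp.linearCombination k (L B b) :=
  B.constr_basis k _ b

lemma Amap_basis_z (B : Module.Basis ι k g) (b : ι) (m : Mon ι) :
    Amap B (B b) (z m) = L B b m := by
  rw [Amap_basis, LC_z]

lemma Amap_z (B : Module.Basis ι k g) (x : g) (m : Mon ι) :
    Amap B x (z m) = Finsupp.linearCombination k (fun a => L B a m) (B.repr x) := by
  rw [Amap, Module.Basis.constr_apply, Finsupp.linearCombination_apply, Finsupp.sum, Finsupp.sum,
    LinearMap.coe_sum, Finset.sum_apply]
  refine Finset.sum_congr rfl fun a _ => ?_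
  rw [LinearMap.smul_apply, LC_z]

/-- the commutator defect -/
noncomputable def Psi2 (B : Module.Basis ι k g) (x y : g) : (V k ι) →ₗ[k] V k ι :=
  Amap B x ∘ₗ Amap B y - Amap B y ∘ₗ Amap B x - Amap B ⁅x, y⁆

lemma psi2_eq {B : Module.Basis ι k g} {x y : g} {v : V k ι} (h : Psi2 B x y v = 0) :
    Amap B x (Amap B y v) = Amap B y (Amap B x v) + Amap B ⁅x, y⁆ v := by
  simp only [Psi2, LinearMap.sub_apply, LinearMap.comp_apply] at h
  rw [sub_sub, sub_eq_zero] at h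
  exact h

lemma psi2_of_eq {B : Module.Basis ι k g} {x y : g} {v : V k ι}
    (h : Amap B x (Amap B y v) = Amap B y (Amap B x v) + Amap B ⁅x, y⁆ v) :
    Psi2 B x y v = 0 := by
  simp only [Psi2, LinearMap.sub_apply, LinearMap.comp_apply]
  rw [sub_sub, sub_eq_zero]
  exact h

lemma comm_wle {B : Module.Basis ι k g} {x y : g} {t : ℕ}
    (h : ∀ w : Mon ι, deg w ≤ t → Psi2 B x y (z w) = 0) :
    ∀ v ∈ Wle k t, Psi2 B x y v = 0 := by
  intro v hv
  rw [Wle, Finsupp.supported_eq_span_single] at hv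
  induction hv using Submodule.span_induction with
  | mem v hv =>
    obtain ⟨w, hw, rfl⟩ := hv
    exact h w hw
  | zero => simp
  | add u w _ _ hu hw => rw [map_add, hu, hw, add_zero]
  | smul c u _ hu => rw [map_smul, hu, smul_zero]

lemma C_easy (B : Module.Basis ι k g) {b c : ι} (hcb : c < b) {m : Mon ι} (hmlb : mlb c m) :
    Psi2 B (B b) (B c) (z m) = 0 := by
  apply psi2_of_eq
  have h1 : Amap B (B c) (z m) = z (m + Finsupp.single c 1) := by
    rw [Amap_basis_z, L_mlb B hmlb]
  set M₁ := m + Finsupp.single c 1 with hM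
  have hcM : c ∈ M₁.support := by
    rw [Finsupp.mem_support_iff, hM, Finsupp.add_apply, Finsupp.single_eq_same]
    omega
  have hmlbc : mlb c M₁ := mlb_add_single hmlb le_rfl
  have hnot : ¬ mlb b M₁ := fun hcon => absurd (hcon c hcM) (not_le.2 hcb)
  have hdminM : dmin M₁ b = c :=
    le_antisymm (dmin_le ⟨c, hcM⟩ b hcM) (hmlbc _ (dmin_mem ⟨c, hcM⟩ b))
  have hsub : M₁ - Finsupp.single c 1 = m := by rw [hM, add_tsub_cancel_right]
  have h2 := L4 B hnot
  rw [hdminM, hsub] at h2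
  rw [h1, Amap_basis_z B b M₁, h2, Amap_basis_z B b m, ← Amap_basis B c,
    ← Amap_z B ⁅B b, B c⁆ m]

lemma psi2_self (B : Module.Basis ι k g) (x : g) (v : V k ι) : Psi2 B x x v = 0 := by
  simp [Psi2, lie_self]

lemma psi2_swap (B : Module.Basis ι k g) (x y : g) (v : V k ι) :
    Psi2 B y x v = - Psi2 B x y v := by
  simp only [Psi2, LinearMap.sub_apply, LinearMap.comp_apply]
  rw [show ⁅y, x⁆ = -⁅x, y⁆ from (lie_skew y x).symm, map_neg]
  simp only [LinearMap.neg_apply]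
  abel

/-- bilinear packaging of the commutator defect -/
noncomputable def Theta (B : Module.Basis ι k g) (m : Mon ι) : g →ₗ[k] g →ₗ[k] V k ι :=
  LinearMap.mk₂ k (fun x y => Psi2 B x y (z m))
    (fun x x' y => by
      simp only [Psi2, LinearMap.sub_apply, LinearMap.comp_apply, map_add, add_lie,
        LinearMap.add_apply]
      abel)
    (fun t x y => by
      simp only [Psi2, LinearMap.sub_apply, LinearMap.comp_apply, map_smul, smul_lie,
        LinearMap.smul_apply, smul_sub])
    (fun x y y' => by
      simp only [Psi2, LinearMap.sub_apply, LinearMap.comp_apply, map_add, lie_add,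
        LinearMap.add_apply]
      abel)
    (fun t x y => by
      simp only [Psi2, LinearMap.sub_apply, LinearMap.comp_apply, map_smul, lie_smul,
        LinearMap.smul_apply, smul_sub])

lemma reduce (B : Module.Basis ι k g) (m : Mon ι)
    (h : ∀ b c : ι, Psi2 B (B b) (B c) (z m) = 0) :
    ∀ x y : g, Psi2 B x y (z m) = 0 := by
  have hth : Theta B m = 0 := by
    apply Module.Basis.ext B; intro b; apply Module.Basis.ext B; intro c
    simpa [Theta, LinearMap.mk₂_apply] using h b c
  intro x y
  have : Psi2 B x y (z m) = Theta B m x y := rfl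
  rw [this, hth]
  rfl

lemma C_hard (B : Module.Basis ι k g) (n : ℕ)
    (IH : ∀ m : Mon ι, deg m ≤ n → ∀ x y : g, Psi2 B x y (z m) = 0)
    {m : Mon ι} (hdeg : deg m = n + 1) {b c : ι} (hcb : c < b) (hmlb : ¬ mlb c m) :
    Psi2 B (B b) (B c) (z m) = 0 := by
  have hne := support_nonempty_of_not_mlb hmlb
  set d := dmin m c with hd
  have hdc : d < c := by rw [hd]; exact dmin_lt_of_not_mlb hmlb c
  have hdb : d < b := hdc.trans hcb
  have hdmem : d ∈ m.support := by rw [hd]; exact dmin_mem hne c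
  set m' := m - Finsupp.single d 1 with hm'
  have hadd : m' + Finsupp.single d 1 = m := sub_single_add hdmem
  have hdm : deg m' = n := by
    have h2 := deg_sub_single hdmem; rw [← hm'] at h2; omega
  have hmlbd : mlb d m' := by
    intro a ha
    rw [hd]
    exact dmin_le hne c (Finsupp.support_tsub ha)
  set p : V k ι := z m' with hp
  have hmlbB : ¬ mlb b m := fun hcon => absurd (hcon _ hdmem) (not_le.2 hdb)
  have hdminb : dmin m b = d := by rw [hd, dmin_eq_min' hne, dmin_eq_min' hne]
  have E1 : Amap B (B b) (z m) = Amap B (B d) (Amap B (B b) p) + Amap B ⁅B b, B d⁆ p := by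
    have h4 := L4 B hmlbB
    rw [hdminb, ← hm'] at h4
    rw [Amap_basis_z, h4, hp, ← Amap_basis_z B b m', ← Amap_basis B d, ← Amap_z]
  have E2 : Amap B (B c) (z m) = Amap B (B d) (Amap B (B c) p) + Amap B ⁅B c, B d⁆ p := by
    have h4 := L4 B hmlb
    rw [← hd, ← hm'] at h4
    rw [Amap_basis_z, h4, hp, ← Amap_basis_z B c m', ← Amap_basis B d, ← Amap_z]
  have hzm : z m = Amap B (B d) p := by
    rw [hp, Amap_basis_z, L_mlb B hmlbd, hadd]
  have IHm' : ∀ x y : g, Amap B x (Amap B y p) = Amap B y (Amap B x p) + Amap B ⁅x, y⁆ p :=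
    fun x y => psi2_eq (IH m' (le_of_eq hdm) x y)
  have S : ∀ e : ι, d < e → ∀ f : ι, d < f → Psi2 B (B e) (B d) (Amap B (B f) p) = 0 := by
    intro e hde f hdf
    have hsplit : Amap B (B f) p = z (m' + Finsupp.single f 1)
        + (L B f m' - z (m' + Finsupp.single f 1)) := by
      rw [hp, Amap_basis_z]; abel
    rw [hsplit, map_add, C_easy B hde (mlb_add_single hmlbd hdf.le), zero_add]
    refine comm_wle (fun w hw => IH w hw _ _) _ ?_
    have h2 := L_sub_lead_mem B n m' f (le_of_eq hdm)
    rwa [hdm] at h2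
  have S1 := psi2_eq (S b hdb c hdc)
  have S2 := psi2_eq (S c hdc b hdb)
  have G3 := IHm' (B b) (B c)
  have G4 := IHm' ⁅B b, B d⁆ (B c)
  have G5 := IHm' (B b) ⁅B c, B d⁆
  have G6 := IHm' ⁅B b, B c⁆ (B d)
  apply psi2_of_eq
  rw [E2, map_add, S1, G5]
  rw [E1, map_add, S2]
  have hd3 : Amap B (B d) (Amap B (B b) (Amap B (B c) p))
      = Amap B (B d) (Amap B (B c) (Amap B (B b) p)) + Amap B (B d) (Amap B ⁅B b, B c⁆ p) := by
    rw [← map_add]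
    exact congrArg _ G3
  have hjac : ⁅⁅B b, B d⁆, B c⁆ + ⁅B b, ⁅B c, B d⁆⁆ - ⁅⁅B b, B c⁆, B d⁆ = (0 : g) := by
    rw [lie_lie (x := B b) (y := B c) (m := B d),
      show ⁅⁅B b, B d⁆, B c⁆ = -⁅B c, ⁅B b, B d⁆⁆ from (lie_skew _ _).symm]
    abel
  have hjacA : Amap B ⁅⁅B b, B d⁆, B c⁆ p + Amap B ⁅B b, ⁅B c, B d⁆⁆ p
      - Amap B ⁅⁅B b, B c⁆, B d⁆ p = 0 := by
    have h0 : Amap B (⁅⁅B b, B d⁆, B c⁆ + ⁅B b, ⁅B c, B d⁆⁆ - ⁅⁅B b, B c⁆, B d⁆) p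
        = Amap B ⁅⁅B b, B d⁆, B c⁆ p + Amap B ⁅B b, ⁅B c, B d⁆⁆ p
          - Amap B ⁅⁅B b, B c⁆, B d⁆ p := by
      rw [map_sub, map_add, LinearMap.sub_apply, LinearMap.add_apply]
    rw [← h0, hjac, map_zero, LinearMap.zero_apply]
  rw [hzm, G6, G4]
  -- now a pure abelian-group identity modulo hd3 and hjacA
  have lhs_eq : Amap B (B d) (Amap B (B b) (Amap B (B c) p))
      = Amap B (B d) (Amap B (B c) (Amap B (B b) p)) + Amap B (B d) (Amap B ⁅B b, B c⁆ p) := hd3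
  rw [lhs_eq]
  have : Amap B ⁅⁅B b, B d⁆, B c⁆ p + Amap B ⁅B b, ⁅B c, B d⁆⁆ p
      = Amap B ⁅⁅B b, B c⁆, B d⁆ p := sub_eq_zero.mp hjacA
  rw [← this]
  abel

lemma C_basis (B : Module.Basis ι k g) :
    ∀ n (m : Mon ι), deg m ≤ n → ∀ x y : g, Psi2 B x y (z m) = 0 := by
  intro n
  induction n with
  | zero =>
    intro m hm
    apply reduce
    intro b c
    rcases lt_trichotomy c b with hcb | rfl | hbc
    · exact C_easy B hcb (mlb_of_deg_zero (Nat.le_zero.1 hm))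
    · exact psi2_self B _ _
    · rw [psi2_swap, neg_eq_zero]
      exact C_easy B hbc (mlb_of_deg_zero (Nat.le_zero.1 hm))
  | succ n IH =>
    intro m hm
    rcases le_or_gt (deg m) n with h | h
    · exact IH m h
    have hdeg : deg m = n + 1 := le_antisymm hm h
    apply reduce
    intro b c
    rcases lt_trichotomy c b with hcb | rfl | hbc
    · by_cases hmlb : mlb c m
      · exact C_easy B hcb hmlb
      · exact C_hard B n IH hdeg hcb hmlb
    · exact psi2_self B _ _
    · rw [psi2_swap, neg_eq_zero]
      by_cases hmlb : mlb b m
      · exact C_easy B hbc hmlb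
      · exact C_hard B n IH hdeg hbc hmlb

/-- the PBW representation as a Lie algebra morphism into endomorphisms -/
noncomputable def ARep (B : Module.Basis ι k g) : g →ₗ⁅k⁆ Module.End k (V k ι) :=
  { Amap B with
    map_lie' := by
      intro x y
      have key : ∀ v : V k ι, Amap B ⁅x, y⁆ v
          = Amap B x (Amap B y v) - Amap B y (Amap B x v) := by
        have h : ∀ m : Mon ι, ∀ t : k, Amap B ⁅x, y⁆ (Finsupp.single m t)
            = Amap B x (Amap B y (Finsupp.single m t))
              - Amap B y (Amap B x (Finsupp.single m t)) := by
          intro m t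
          have hz := psi2_eq (C_basis B (deg m) m le_rfl x y)
          have hsingle : (Finsupp.single m t : V k ι) = t • z m := by
            rw [z, Finsupp.smul_single, smul_eq_mul, mul_one]
          rw [hsingle]
          simp only [map_smul]
          rw [hz, smul_add]
          abel
        intro v
        have hext : (Amap B ⁅x, y⁆ : (V k ι) →ₗ[k] V k ι)
            = (Amap B x ∘ₗ Amap B y - Amap B y ∘ₗ Amap B x) := by
          apply Finsupp.lhom_ext
          intro m t
          simpa [LinearMap.sub_apply, LinearMap.comp_apply] using h m t
        rw [hext]
        simp [LinearMap.sub_apply, LinearMap.comp_apply]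
      show Amap B ⁅x, y⁆ = ⁅Amap B x, Amap B y⁆
      apply LinearMap.ext
      intro v
      rw [show (⁅Amap B x, Amap B y⁆ : Module.End k (V k ι)) v
          = Amap B x (Amap B y v) - Amap B y (Amap B x v) from rfl]
      exact key v }

lemma ARep_apply (B : Module.Basis ι k g) (x : g) (v : V k ι) : ARep B x v = Amap B x v := rfl

/-- injectivity of the canonical map into the universal enveloping algebra -/
theorem pbw_injective_aux (B : Module.Basis ι k g) (X : g)
    (hX : UniversalEnvelopingAlgebra.ι k X = 0) : X = 0 := by
  have h1 : UniversalEnvelopingAlgebra.lift k (ARep B) (UniversalEnvelopingAlgebra.ι k X)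
      = ARep B X := UniversalEnvelopingAlgebra.lift_ι_apply k (ARep B) X
  rw [hX, map_zero] at h1
  have h2 : Amap B X (z 0) = 0 := by
    rw [← ARep_apply, ← h1]
    rfl
  rw [Amap_z] at h2
  have h3 : Finsupp.linearCombination k (fun a : ι => (z (Finsupp.single a 1) : V k ι)) (B.repr X)
      = 0 := by
    have hfun : (fun a : ι => (z (Finsupp.single a 1) : V k ι)) = fun a => L B a 0 := by
      funext a; rw [L_zero]
    rw [hfun]; exact h2
  have h4 : Finsupp.linearCombination k (fun a : ι => (z (Finsupp.single a 1) : V k ι))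
      = Finsupp.lmapDomain k k (fun a : ι => (Finsupp.single a 1 : Mon ι)) := by
    apply Finsupp.lhom_ext
    intro a t
    rw [Finsupp.linearCombination_single, Finsupp.lmapDomain_apply, Finsupp.mapDomain_single,
      z, Finsupp.smul_single, smul_eq_mul, mul_one]
  rw [h4] at h3
  have h5 : B.repr X = 0 := by
    have hinj : Function.Injective (fun a : ι => (Finsupp.single a 1 : Mon ι)) :=
      Finsupp.single_left_injective one_ne_zero
    have := Finsupp.mapDomain_injective hinj (α := ι) (M := k)
    exact this (by simpa using h3)
  have h6 := congrArg B.repr.symm h5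
  simpa using h6

end PBWProof

theorem UEA_ι_injective (k g : Type u) [Field k] [LieRing g] [LieAlgebra k g] :
    Function.Injective (UniversalEnvelopingAlgebra.ι k (L := g)) := by
  letI : LinearOrder (Module.Basis.ofVectorSpaceIndex k g) :=
    IsWellOrder.linearOrder WellOrderingRel
  have B := Module.Basis.ofVectorSpace k g
  intro X Y h
  have h0 : UniversalEnvelopingAlgebra.ι k (X - Y) = 0 := by
    rw [map_sub, h, sub_self]
  have h1 := PBWProof.pbw_injective_aux B (X - Y) h0
  exact sub_eq_zero.mp h1


namespace Helpers

variable {k g : Type u} [Field k] [CharZero k] [LieRing g] [LieAlgebra k g]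

/-- insert `x` at position `j` (counted from the front) into a tuple. -/
noncomputable def ins (x : UEnv k g) : ∀ {n : ℕ}, ℕ → (Fin n → UEnv k g) → (Fin (n+1) → UEnv k g)
  | _, 0, f => Fin.cons x f
  | 0, _+1, f => Fin.cons x f
  | _+1, j+1, f => Fin.cons (f 0) (ins x j (Fin.tail f))

lemma tpow_succ (n : ℕ) (f : Fin (n+1) → UEnv k g) :
    tpow k g (n+1) f = (f 0) ⊗ₜ[k] (tpow k g n (Fin.tail f)) := rfl

lemma tpow_cons (n : ℕ) (x : UEnv k g) (f : Fin n → UEnv k g) :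
    tpow k g (n+1) (Fin.cons x f) = x ⊗ₜ[k] tpow k g n f := by
  rw [tpow_succ]
  simp [Fin.tail_cons]
  rfl

lemma ins_zero {n : ℕ} (x : UEnv k g) (f : Fin n → UEnv k g) :
    ins x 0 f = Fin.cons x f := by
  cases n <;> rfl

lemma ins_succ {n : ℕ} (j : ℕ) (x : UEnv k g) (f : Fin (n+1) → UEnv k g) :
    ins x (j+1) f = Fin.cons (f 0) (ins x j (Fin.tail f)) := rfl

lemma insFront_tpow (n : ℕ) (f : Fin n → UEnv k g) :
    insFront k g n (tpow k g n f) = tpow k g (n+1) (ins 1 0 f) := by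
  rw [ins_zero, tpow_cons]
  rfl

lemma insBack_tpow : ∀ (n : ℕ) (f : Fin n → UEnv k g),
    insBack k g n (tpow k g n f) = tpow k g (n+1) (ins 1 n f) := by
  intro n
  induction n with
  | zero =>
    intro f
    rw [ins_zero, tpow_cons]
    rfl
  | succ n IH =>
    intro f
    rw [ins_succ, tpow_cons, tpow_succ]
    show LinearMap.lTensor (UEnv k g) (insBack k g n) (f 0 ⊗ₜ[k] tpow k g n (Fin.tail f)) = _
    rw [LinearMap.lTensor_tmul, IH]

variable (Δ : UEnv k g →ₗ[k] UEnv k g ⊗[k] UEnv k g)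

lemma comulAt_tpow : ∀ (n : ℕ) (j : ℕ), j < n → ∀ (f : Fin n → UEnv k g),
    (∀ i, Δ (f i) = (f i) ⊗ₜ[k] 1 + 1 ⊗ₜ[k] (f i)) →
    comulAt k g Δ n j (tpow k g n f)
      = tpow k g (n+1) (ins 1 (j+1) f) + tpow k g (n+1) (ins 1 j f) := by
  intro n
  induction n with
  | zero => intro j hj; omega
  | succ n IH =>
    intro j hj f hf
    cases j with
    | zero =>
      rw [tpow_succ]
      show (TensorProduct.assoc k (UEnv k g) (UEnv k g) (UPow k g n)).toLinearMap
        (LinearMap.rTensor (UPow k g n) Δ (f 0 ⊗ₜ[k] tpow k g n (Fin.tail f))) = _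
      rw [LinearMap.rTensor_tmul, hf 0, TensorProduct.add_tmul]
      rw [map_add]
      rw [LinearEquiv.coe_coe, TensorProduct.assoc_tmul, TensorProduct.assoc_tmul]
      rw [ins_succ, ins_zero, ins_zero, tpow_cons, tpow_cons, tpow_cons, tpow_succ]
      rfl
    | succ j =>
      rw [tpow_succ]
      show LinearMap.lTensor (UEnv k g) (comulAt k g Δ n j)
        (f 0 ⊗ₜ[k] tpow k g n (Fin.tail f)) = _
      rw [LinearMap.lTensor_tmul, IH j (by omega) (Fin.tail f) (fun i => hf i.succ),
        TensorProduct.tmul_add]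
      rw [ins_succ (j+1), ins_succ j, tpow_cons, tpow_cons]
      rfl

variable (M : Type u) [AddCommGroup M] [Module k M]
  [Module (UEnv k g)ᵐᵒᵖ M] [IsScalarTower k (UEnv k g)ᵐᵒᵖ M]

lemma coface_zero (n : ℕ) :
    coface k g Δ M n 0 = LinearMap.rTensor M (insFront k g n) := by
  rw [coface, if_pos rfl]

lemma coface_mid (n j : ℕ) (hj : j < n) :
    coface k g Δ M n (j+1) = LinearMap.rTensor M (comulAt k g Δ n j) := by
  rw [coface, if_neg (Nat.succ_ne_zero j), if_pos (by omega)]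
  simp

lemma coface_last (n : ℕ) :
    coface k g Δ M n (n+1) = LinearMap.rTensor M (insBack k g n) := by
  rw [coface, if_neg (Nat.succ_ne_zero n), if_neg (by omega)]

lemma b_tpow (n : ℕ) (f : Fin n → UEnv k g)
    (hf : ∀ i, Δ (f i) = (f i) ⊗ₜ[k] 1 + 1 ⊗ₜ[k] (f i)) (m : M) :
    bCoboundary k g Δ M n (tpow k g n f ⊗ₜ[k] m) = 0 := by
  set t : ℕ → (UPow k g (n+1) ⊗[k] M) := fun i => tpow k g (n+1) (ins 1 i f) ⊗ₜ[k] m with ht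
  set u : ℕ → (UPow k g (n+1) ⊗[k] M) := fun i => ((-1 : ℤ)^i) • t i with hu
  have hF0 : coface k g Δ M n 0 (tpow k g n f ⊗ₜ[k] m) = t 0 := by
    rw [coface_zero, LinearMap.rTensor_tmul, insFront_tpow]
  have hFmid : ∀ j, j < n → coface k g Δ M n (j+1) (tpow k g n f ⊗ₜ[k] m)
      = t (j+1) + t j := by
    intro j hj
    rw [coface_mid Δ M n j hj, LinearMap.rTensor_tmul, comulAt_tpow Δ n j hj f hf,
      TensorProduct.add_tmul]
  have hFlast : coface k g Δ M n (n+1) (tpow k g n f ⊗ₜ[k] m) = t n := by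
    rw [coface_last, LinearMap.rTensor_tmul, insBack_tpow]
  rw [bCoboundary, LinearMap.sum_apply]
  have hterm : ∀ i ∈ Finset.range (n+2),
      (((-1 : ℤ)^i) • coface k g Δ M n i) (tpow k g n f ⊗ₜ[k] m)
      = ((-1 : ℤ)^i) • coface k g Δ M n i (tpow k g n f ⊗ₜ[k] m) := by
    intro i _; rfl
  rw [Finset.sum_congr rfl hterm]
  rw [Finset.sum_range_succ', Finset.sum_range_succ]
  have e0 : ((-1 : ℤ)^(0:ℕ)) • coface k g Δ M n 0 (tpow k g n f ⊗ₜ[k] m) = u 0 := by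
    rw [hF0]
  have elast : ((-1 : ℤ)^(n+1)) • coface k g Δ M n (n+1) (tpow k g n f ⊗ₜ[k] m)
      = - u n := by
    rw [hFlast, hu, pow_succ, mul_smul]
    simp
  have emid : ∀ j ∈ Finset.range n,
      ((-1 : ℤ)^(j+1)) • coface k g Δ M n (j+1) (tpow k g n f ⊗ₜ[k] m)
      = u (j+1) - u j := by
    intro j hj
    rw [hFmid j (Finset.mem_range.1 hj), smul_add, hu]
    have h1 : ((-1 : ℤ)^(j+1)) • t j = - (((-1 : ℤ)^j) • t j) := by
      rw [pow_succ, mul_comm, mul_smul]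
      simp
    rw [h1]
    abel
  rw [Finset.sum_congr rfl emid, Finset.sum_range_sub (fun j => u j), e0, elast]
  abel

end Helpers


namespace Helpers2

open Helpers

variable {k g : Type u} [Field k] [CharZero k] [LieRing g] [LieAlgebra k g]

lemma wedge_span (n : ℕ) :
    Submodule.span k {p : ⋀[k]^n g |
      ∃ X : Fin n → g, (p : ExteriorAlgebra k g) = ExteriorAlgebra.ιMulti k n X} = ⊤ := by
  apply Submodule.map_injective_of_injective ((⋀[k]^n g).injective_subtype)
  rw [Submodule.map_span, Submodule.map_top, Submodule.range_subtype]
  have himg : (⋀[k]^n g).subtype ''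
      {p : ⋀[k]^n g | ∃ X : Fin n → g,
        (p : ExteriorAlgebra k g) = ExteriorAlgebra.ιMulti k n X}
      = Set.range (ExteriorAlgebra.ιMulti k n (M := g)) := by
    ext y
    constructor
    · rintro ⟨p, ⟨X, hX⟩, rfl⟩
      exact ⟨X, hX.symm⟩
    · rintro ⟨X, rfl⟩
      exact ⟨⟨_, ExteriorAlgebra.ιMulti_range k n (Set.mem_range_self X)⟩, ⟨X, rfl⟩, rfl⟩
  rw [himg, ExteriorAlgebra.ιMulti_span_fixedDegree]

variable {M : Type u} [AddCommGroup M] [Module k M]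

lemma ext_wedge {W : Type u} [AddCommGroup W] [Module k W] {n : ℕ}
    {F G : M ⊗[k] (⋀[k]^n g) →ₗ[k] W}
    (h : ∀ (m : M) (X : Fin n → g),
      F (m ⊗ₜ[k] (⟨ExteriorAlgebra.ιMulti k n X,
          ExteriorAlgebra.ιMulti_range k n (Set.mem_range_self X)⟩ : ⋀[k]^n g))
      = G (m ⊗ₜ[k] (⟨ExteriorAlgebra.ιMulti k n X,
          ExteriorAlgebra.ιMulti_range k n (Set.mem_range_self X)⟩ : ⋀[k]^n g))) :
    F = G := by
  apply TensorProduct.ext'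
  intro m p
  have hp : p ∈ Submodule.span k {p : ⋀[k]^n g |
      ∃ X : Fin n → g, (p : ExteriorAlgebra k g) = ExteriorAlgebra.ιMulti k n X} := by
    rw [wedge_span]; exact Submodule.mem_top
  induction hp using Submodule.span_induction with
  | mem q hq =>
    obtain ⟨X, hX⟩ := hq
    have hq2 : q = ⟨ExteriorAlgebra.ιMulti k n X,
        ExteriorAlgebra.ιMulti_range k n (Set.mem_range_self X)⟩ := Subtype.ext hX
    rw [hq2]
    exact h m X
  | zero => rw [TensorProduct.tmul_zero, map_zero, map_zero]
  | add x y _ _ hx hy => rw [TensorProduct.tmul_add, map_add, map_add, hx, hy]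
  | smul c x _ hx => rw [TensorProduct.tmul_smul, map_smul, map_smul, hx]

noncomputable def UPowToExt (π : UEnv k g →ₗ[k] g) :
    ∀ n : ℕ, UPow k g n →ₗ[k] ExteriorAlgebra k g
  | 0 => (Algebra.linearMap k (ExteriorAlgebra k g) : k →ₗ[k] ExteriorAlgebra k g)
  | n+1 =>
    (TensorProduct.lift (((LinearMap.mul k (ExteriorAlgebra k g)).comp
        ((ExteriorAlgebra.ι k (M := g)) ∘ₗ π)).compl₂ (UPowToExt π n)) :
      UEnv k g ⊗[k] UPow k g n →ₗ[k] ExteriorAlgebra k g)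

lemma UPowToExt_tpow (π : UEnv k g →ₗ[k] g) :
    ∀ (n : ℕ) (f : Fin n → UEnv k g),
    UPowToExt π n (tpow k g n f)
      = (List.ofFn fun i => ExteriorAlgebra.ι k (π (f i))).prod := by
  intro n
  induction n with
  | zero =>
    intro f
    show Algebra.linearMap k (ExteriorAlgebra k g) (1 : k) = _
    simp
  | succ n IH =>
    intro f
    rw [tpow_succ]
    show TensorProduct.lift _ ((f 0) ⊗ₜ[k] tpow k g n (Fin.tail f)) = _
    rw [TensorProduct.lift.tmul, LinearMap.compl₂_apply, LinearMap.comp_apply,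
      LinearMap.comp_apply, IH (Fin.tail f), LinearMap.mul_apply', List.ofFn_succ,
      List.prod_cons]
    rfl

variable (M) in
noncomputable def Rmap (π : UEnv k g →ₗ[k] g) (n : ℕ) :
    UPow k g n ⊗[k] M →ₗ[k] M ⊗[k] ExteriorAlgebra k g :=
  (TensorProduct.comm k (ExteriorAlgebra k g) M).toLinearMap.comp
    (LinearMap.rTensor M (UPowToExt π n))

lemma Rmap_tmul (π : UEnv k g →ₗ[k] g) (n : ℕ) (w : UPow k g n) (m : M) :
    Rmap M π n (w ⊗ₜ[k] m) = m ⊗ₜ[k] (UPowToExt π n w) := by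
  rw [Rmap, LinearMap.comp_apply, LinearMap.rTensor_tmul, LinearEquiv.coe_coe,
    TensorProduct.comm_tmul]

end Helpers2

end PBWInst

theorem antisymmetrisation_injective_and_cocycle
    -- the coalgebra structure maps of `U(g)`
    (ε : UEnv k g →ₗ[k] k)
    (hcoassoc :
      (TensorProduct.assoc k _ _ _).toLinearMap ∘ₗ
          (LinearMap.rTensor (UEnv k g) Δ) ∘ₗ Δ = (LinearMap.lTensor (UEnv k g) Δ) ∘ₗ Δ)
    (hcounitL :
      (TensorProduct.lid k (UEnv k g)).toLinearMap ∘ₗ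
          (LinearMap.rTensor (UEnv k g) ε) ∘ₗ Δ = LinearMap.id)
    (hcounitR :
      (TensorProduct.rid k (UEnv k g)).toLinearMap ∘ₗ
          (LinearMap.lTensor (UEnv k g) ε) ∘ₗ Δ = LinearMap.id)
    (hΔ_one : Δ 1 = 1 ⊗ₜ[k] 1) (hΔ_mul : ∀ u v, Δ (u * v) = Δ u * Δ v)
    (hε_one : ε 1 = 1) (hε_mul : ∀ u v, ε (u * v) = ε u * ε v)
    -- the generators are primitive, with vanishing counit
    (hΔι : ∀ X : g,
      Δ ((UniversalEnvelopingAlgebra.ι k (L := g)) X) =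
        ((UniversalEnvelopingAlgebra.ι k (L := g)) X) ⊗ₜ[k] 1 +
          1 ⊗ₜ[k] ((UniversalEnvelopingAlgebra.ι k (L := g)) X))
    (hει : ∀ X : g, ε ((UniversalEnvelopingAlgebra.ι k (L := g)) X) = 0)
    -- `M` is flat over the base (automatic over a field)
    [Module.Flat k M]
    -- the antisymmetrisation maps
    (Ξ : ∀ n : ℕ, M ⊗[k] (⋀[k]^n g) →ₗ[k] UPow k g n ⊗[k] M)
    (hΞ : ∀ (n : ℕ) (m : M) (X : Fin n → g),
      Ξ n (m ⊗ₜ[k]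
          (⟨ExteriorAlgebra.ιMulti k n X,
            ExteriorAlgebra.ιMulti_range k n (Set.mem_range_self X)⟩ : ⋀[k]^n g)) =
        ((n.factorial : k)⁻¹) •
          ∑ σ : Equiv.Perm (Fin n),
            ((Equiv.Perm.sign σ : ℤ) •
              ((tpow k g n
                  (fun i => (UniversalEnvelopingAlgebra.ι k (L := g)) (X (σ i)))) ⊗ₜ[k] m))) :
    ∀ n : ℕ, Function.Injective (Ξ n) ∧
      ∀ x : M ⊗[k] (⋀[k]^n g), bCoboundary k g Δ M n (Ξ n x) = 0 := by
  intro n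
  letI : LieRing (UEnv k g) := LieRing.ofAssociativeRing
  have hι : Function.Injective
      ((UniversalEnvelopingAlgebra.ι k (L := g)).toLinearMap : g →ₗ[k] UEnv k g) := by
    have h0 := UEA_ι_injective k g
    simpa using h0
  obtain ⟨π, hπ⟩ := LinearMap.exists_leftInverse_of_injective
    (UniversalEnvelopingAlgebra.ι k (L := g)).toLinearMap (LinearMap.ker_eq_bot.2 hι)
  have hπ' : ∀ x : g, π ((UniversalEnvelopingAlgebra.ι k (L := g)) x) = x := by
    intro x
    have h0 := LinearMap.ext_iff.1 hπ x
    simpa using h0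
  have hcomp : (Helpers2.Rmap M π n) ∘ₗ (Ξ n)
      = LinearMap.lTensor M (Submodule.subtype (⋀[k]^n g)) := by
    apply Helpers2.ext_wedge
    intro m X
    rw [LinearMap.comp_apply, hΞ n m X, map_smul, map_sum]
    have hσ : ∀ σ : Equiv.Perm (Fin n),
        (Helpers2.Rmap M π n)
          ((Equiv.Perm.sign σ : ℤ) •
            ((tpow k g n fun i =>
              (UniversalEnvelopingAlgebra.ι k (L := g)) (X (σ i))) ⊗ₜ[k] m))
        = m ⊗ₜ[k] (ExteriorAlgebra.ιMulti k n X : ExteriorAlgebra k g) := by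
      intro σ
      rw [map_zsmul, Helpers2.Rmap_tmul, Helpers2.UPowToExt_tpow]
      have h1 : (List.ofFn fun i => ExteriorAlgebra.ι k
            (π ((UniversalEnvelopingAlgebra.ι k (L := g)) (X (σ i)))))
          = List.ofFn fun i => ExteriorAlgebra.ι k ((X ∘ σ) i) := by
        congr 1
        funext i
        rw [hπ']
        rfl
      rw [h1, ← ExteriorAlgebra.ιMulti_apply, AlternatingMap.map_perm]
      rw [Units.smul_def, TensorProduct.tmul_smul, smul_smul]
      have h2 : ((Equiv.Perm.sign σ : ℤ)) * ((Equiv.Perm.sign σ : ℤ)) = 1 := by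
        rw [← Units.val_mul, Int.units_mul_self, Units.val_one]
      rw [h2, one_smul]
    rw [Finset.sum_congr rfl (fun σ _ => hσ σ), Finset.sum_const, Finset.card_univ,
      Fintype.card_perm, Fintype.card_fin]
    rw [← Nat.cast_smul_eq_nsmul k, smul_smul,
      inv_mul_cancel₀ (by exact_mod_cast Nat.factorial_ne_zero n), one_smul]
    rw [LinearMap.lTensor_tmul]
    rfl
  constructor
  · have hinj2 : Function.Injective
        (LinearMap.lTensor M (Submodule.subtype (⋀[k]^n g))) :=
      Module.Flat.lTensor_preserves_injective_linearMap _ ((⋀[k]^n g).injective_subtype)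
    intro x y hxy
    apply hinj2
    have hx := LinearMap.ext_iff.1 hcomp x
    have hy := LinearMap.ext_iff.1 hcomp y
    rw [LinearMap.comp_apply] at hx hy
    rw [← hx, ← hy, hxy]
  · have hzero : (bCoboundary k g Δ M n) ∘ₗ (Ξ n) = 0 := by
      apply Helpers2.ext_wedge
      intro m X
      rw [LinearMap.comp_apply, hΞ n m X, map_smul, map_sum, LinearMap.zero_apply]
      rw [Finset.sum_eq_zero, smul_zero]
      intro σ _
      rw [map_zsmul, Helpers.b_tpow Δ M n _ (fun i => hΔι (X (σ i))) m, smul_zero]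
    intro x
    have h0 := LinearMap.ext_iff.1 hzero x
    rw [LinearMap.comp_apply] at h0
    simpa using h0
end

section
/- In a left Hopf algebroid U over A, the translation map satisfies u_+ ⊗_{A^op} u_{-(1)} ⊗_A u_{-(2)} = u_{++} ⊗_{A^op} u_- ⊗_A u_{+-}, where on the right-hand side the tensor over A^op links the first and third components. -/
/-!
Left bialgebroids and left Hopf algebroids (Schauenburg's `×_A`-Hopf algebras).

Let `k` be a commutative ring, `A` a `k`-algebra, and `U` a `k`-algebra.  A left bialgebroid
structure on `U` over `A` consists of a source map `s : A → U` (a ring homomorphism) and a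
target map `t : A → U` (a ring anti-homomorphism) with commuting images, together with an
`A`-coring structure `(Δ, ε)` on `U` for the `(A,A)`-bimodule structure
`a ▷ u ◁ b := s(a)t(b)u`, such that `Δ` lands in the Takeuchi product and is multiplicative,
and `ε` satisfies `ε(u s(ε v)) = ε(uv) = ε(u t(ε v))`.

The relevant tensor products over the (noncommutative) base `A` are realised as quotients of
the tensor product over `k`:
* `T2 = U ⊗_A U` is `U ⊗[k] U` modulo `t(a)u ⊗ v - u ⊗ s(a)v`;
* `T3 = U ⊗_A U ⊗_A U` is `U ⊗[k] U ⊗[k] U` modulo the analogous relations in both places;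
* `TOp = U ⊗_{Aᵒᵖ} U` is `U ⊗[k] U` modulo `u t(a) ⊗ v - u ⊗ t(a)v`.

Auxiliary structure maps on these quotients (which exist uniquely, being induced by
well-defined maps on `U ⊗[k] U`) are bundled as data together with the equations
characterising them on generators.

A left Hopf algebroid is a left bialgebroid whose Hopf–Galois map
`β : U ⊗_{Aᵒᵖ} U → U ⊗_A U`, `u ⊗ v ↦ u_{(1)} ⊗ u_{(2)}v`, is bijective; the translation
map is `u_+ ⊗_{Aᵒᵖ} u_- := β⁻¹(u ⊗_A 1)`.
-/

open TensorProduct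

section Bgd

variable (k A U : Type*) [CommRing k] [Ring A] [Ring U] [Algebra k A] [Algebra k U]

/-- The defining relations of `U ⊗_A U` (as a quotient of `U ⊗[k] U`):
`(u ◁ a) ⊗ v = u ⊗ (a ▷ v)`, i.e. `t(a)u ⊗ v = u ⊗ s(a)v`. -/
def bgdRel (s t : A →ₗ[k] U) : Submodule k (U ⊗[k] U) :=
  Submodule.span k
    {x | ∃ (a : A) (u v : U), x = (t a * u) ⊗ₜ[k] v - u ⊗ₜ[k] (s a * v)}

/-- `U ⊗_A U`. -/
abbrev T2 (s t : A →ₗ[k] U) := (U ⊗[k] U) ⧸ bgdRel k A U s t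

/-- The canonical projection `U ⊗[k] U → U ⊗_A U`. -/
def π2 (s t : A →ₗ[k] U) : U ⊗[k] U →ₗ[k] T2 k A U s t := (bgdRel k A U s t).mkQ

/-- The defining relations of `U ⊗_A U ⊗_A U` (as a quotient of `U ⊗[k] (U ⊗[k] U)`). -/
def bgdRel3 (s t : A →ₗ[k] U) : Submodule k (U ⊗[k] (U ⊗[k] U)) :=
  Submodule.span k
    ({x | ∃ (a : A) (u v w : U),
        x = (t a * u) ⊗ₜ[k] (v ⊗ₜ[k] w) - u ⊗ₜ[k] ((s a * v) ⊗ₜ[k] w)} ∪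
     {x | ∃ (a : A) (u v w : U),
        x = u ⊗ₜ[k] ((t a * v) ⊗ₜ[k] w) - u ⊗ₜ[k] (v ⊗ₜ[k] (s a * w))})

/-- `U ⊗_A U ⊗_A U`. -/
abbrev T3 (s t : A →ₗ[k] U) := (U ⊗[k] (U ⊗[k] U)) ⧸ bgdRel3 k A U s t

/-- The canonical projection onto `U ⊗_A U ⊗_A U`. -/
def π3 (s t : A →ₗ[k] U) : U ⊗[k] (U ⊗[k] U) →ₗ[k] T3 k A U s t := (bgdRel3 k A U s t).mkQ

/-- The defining relations of `U ⊗_{Aᵒᵖ} U` (as a quotient of `U ⊗[k] U`):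
`(a ▸ u) ⊗ v = u ⊗ (v ◁ a)`, i.e. `u t(a) ⊗ v = u ⊗ t(a)v`. -/
def opRel (t : A →ₗ[k] U) : Submodule k (U ⊗[k] U) :=
  Submodule.span k
    {x | ∃ (a : A) (u v : U), x = (u * t a) ⊗ₜ[k] v - u ⊗ₜ[k] (t a * v)}

/-- `U ⊗_{Aᵒᵖ} U`. -/
abbrev TOp (t : A →ₗ[k] U) := (U ⊗[k] U) ⧸ opRel k A U t

/-- The canonical projection `U ⊗[k] U → U ⊗_{Aᵒᵖ} U`. -/
def πOp (t : A →ₗ[k] U) : U ⊗[k] U →ₗ[k] TOp k A U t := (opRel k A U t).mkQ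

variable (s t : A →ₗ[k] U)

/-- A left bialgebroid structure on the `k`-algebra `U` over the base `k`-algebra `A`,
with source map `s` and target map `t`. -/
structure LeftBialgebroid : Type _ where
  s_one : s 1 = 1
  s_mul : ∀ a b : A, s (a * b) = s a * s b
  t_one : t 1 = 1
  t_mul : ∀ a b : A, t (a * b) = t b * t a
  st_comm : ∀ a b : A, s a * t b = t b * s a
  /-- the coproduct -/
  Δ : U →ₗ[k] T2 k A U s t
  /-- the counit -/
  ε : U →ₗ[k] A
  Δ_one : Δ 1 = π2 k A U s t (1 ⊗ₜ[k] 1)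
  ε_one : ε 1 = 1
  /-- `(ε ⊗ id)`-contraction `u ⊗_A v ↦ s(ε u)v` -/
  cuL : T2 k A U s t →ₗ[k] U
  cuL_eq : ∀ x y : U, cuL (π2 k A U s t (x ⊗ₜ[k] y)) = s (ε x) * y
  /-- `(id ⊗ ε)`-contraction `u ⊗_A v ↦ t(ε v)u` -/
  cuR : T2 k A U s t →ₗ[k] U
  cuR_eq : ∀ x y : U, cuR (π2 k A U s t (x ⊗ₜ[k] y)) = t (ε y) * x
  /-- left counitality -/
  counit_left : ∀ u : U, cuL (Δ u) = u
  /-- right counitality -/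
  counit_right : ∀ u : U, cuR (Δ u) = u
  /-- the action `a ⬝ (u ⊗_A v) = u t(a) ⊗_A v` -/
  actL : A → T2 k A U s t →ₗ[k] T2 k A U s t
  actL_eq : ∀ (a : A) (x y : U),
    actL a (π2 k A U s t (x ⊗ₜ[k] y)) = π2 k A U s t ((x * t a) ⊗ₜ[k] y)
  /-- the action `(u ⊗_A v) ⬝ a = u ⊗_A v s(a)` -/
  actR : A → T2 k A U s t →ₗ[k] T2 k A U s t
  actR_eq : ∀ (a : A) (x y : U),
    actR a (π2 k A U s t (x ⊗ₜ[k] y)) = π2 k A U s t (x ⊗ₜ[k] (y * s a))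
  /-- the coproduct takes values in the Takeuchi product `U ×_A U` -/
  takeuchi : ∀ (a : A) (u : U), actL a (Δ u) = actR a (Δ u)
  /-- `Δ ⊗_A id` -/
  ΔL : T2 k A U s t →ₗ[k] T3 k A U s t
  ΔL_eq : ∀ (x y : U) (w : U ⊗[k] U), π2 k A U s t w = Δ x →
    ΔL (π2 k A U s t (x ⊗ₜ[k] y)) =
      ((π3 k A U s t) ∘ₗ
        (LinearMap.lTensor U ((TensorProduct.mk k U U).flip y))) w
  /-- `id ⊗_A Δ` -/
  ΔR : T2 k A U s t →ₗ[k] T3 k A U s t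
  ΔR_eq : ∀ (x y : U) (w : U ⊗[k] U), π2 k A U s t w = Δ y →
    ΔR (π2 k A U s t (x ⊗ₜ[k] y)) =
      ((π3 k A U s t) ∘ₗ (TensorProduct.mk k U (U ⊗[k] U) x)) w
  /-- coassociativity -/
  coassoc : ∀ u : U, ΔL (Δ u) = ΔR (Δ u)
  /-- right multiplication in both tensor legs: `(p ⊗_A q) ⬝ (x ⊗ y) = px ⊗_A qy` -/
  mulT : U ⊗[k] U →ₗ[k] T2 k A U s t →ₗ[k] T2 k A U s t
  mulT_eq : ∀ x y p q : U,
    mulT (x ⊗ₜ[k] y) (π2 k A U s t (p ⊗ₜ[k] q)) = π2 k A U s t ((p * x) ⊗ₜ[k] (q * y))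
  /-- multiplicativity of the coproduct -/
  Δ_mul : ∀ (u v : U) (w : U ⊗[k] U), π2 k A U s t w = Δ v → Δ (u * v) = mulT w (Δ u)
  /-- the counit identities `ε(u s(ε v)) = ε(uv) = ε(u t(ε v))` -/
  ε_s : ∀ u v : U, ε (u * s (ε v)) = ε (u * v)
  ε_t : ∀ u v : U, ε (u * t (ε v)) = ε (u * v)

/-- A left Hopf algebroid structure (`×_A`-Hopf algebra) on a left bialgebroid `B`:
the Hopf–Galois map `β : U ⊗_{Aᵒᵖ} U → U ⊗_A U`, `u ⊗ v ↦ u_{(1)} ⊗ u_{(2)}v`, together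
with a (two-sided) inverse. -/
structure LeftHopfAlgebroid (B : LeftBialgebroid k A U s t) where
  /-- right multiplication on the second leg of `U ⊗_A U` -/
  mulSnd : U → T2 k A U s t →ₗ[k] T2 k A U s t
  mulSnd_eq : ∀ v x y : U,
    mulSnd v (π2 k A U s t (x ⊗ₜ[k] y)) = π2 k A U s t (x ⊗ₜ[k] (y * v))
  /-- the Hopf–Galois map -/
  β : TOp k A U t →ₗ[k] T2 k A U s t
  β_eq : ∀ u v : U, β (πOp k A U t (u ⊗ₜ[k] v)) = mulSnd v (B.Δ u)
  /-- the inverse of the Hopf–Galois map -/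
  βinv : T2 k A U s t →ₗ[k] TOp k A U t
  β_left_inv : βinv ∘ₗ β = LinearMap.id
  β_right_inv : β ∘ₗ βinv = LinearMap.id

end Bgd

/-!
STATEMENT 18: In a left Hopf algebroid `U` over `A`, the translation map satisfies
`u_+ ⊗_{Aᵒᵖ} u_{-(1)} ⊗_A u_{-(2)} = u_{++} ⊗_{Aᵒᵖ} u_- ⊗_A u_{+-}`,
where on the right-hand side the tensor product over `Aᵒᵖ` links the first and third
tensor components.

The common target is the quotient `TMix` of `U ⊗[k] U ⊗[k] U` by the `⊗_A`-relation
between the second and third legs and the `⊗_{Aᵒᵖ}`-relation linking the first and third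
legs.  `Ψ` is `id ⊗ Δ` applied to the translation map (the left-hand side), built from the
insertion map `F x : U ⊗_A U → TMix`, `p ⊗ q ↦ x ⊗ p ⊗ q`; `Φ` is the right-hand side,
built from `G : (p ⊗_{Aᵒᵖ} q, y) ↦ p ⊗ y ⊗ q` applied to the translation map of the
first leg.
-/

section Stmt18

variable (k A U : Type*) [CommRing k] [Ring A] [Ring U] [Algebra k A] [Algebra k U]

/-- The relations of the mixed tensor product `U ⊗_{Aᵒᵖ} U ⊗_A U`, with `⊗_A` between the
second and third legs and `⊗_{Aᵒᵖ}` linking the first and third legs. -/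
def mixRel (s t : A →ₗ[k] U) : Submodule k (U ⊗[k] (U ⊗[k] U)) :=
  Submodule.span k
    ({x | ∃ (a : A) (u v w : U),
        x = u ⊗ₜ[k] ((t a * v) ⊗ₜ[k] w) - u ⊗ₜ[k] (v ⊗ₜ[k] (s a * w))} ∪
     {x | ∃ (a : A) (u v w : U),
        x = (u * t a) ⊗ₜ[k] (v ⊗ₜ[k] w) - u ⊗ₜ[k] (v ⊗ₜ[k] (t a * w))})

/-- `U ⊗_{Aᵒᵖ} U ⊗_A U` (with the `Aᵒᵖ`-relation linking legs one and three). -/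
abbrev TMix (s t : A →ₗ[k] U) := (U ⊗[k] (U ⊗[k] U)) ⧸ mixRel k A U s t

/-- The canonical projection onto `TMix`. -/
def πMix (s t : A →ₗ[k] U) : U ⊗[k] (U ⊗[k] U) →ₗ[k] TMix k A U s t :=
  (mixRel k A U s t).mkQ


/-! ### Auxiliary constructions for the proof -/

section Aux

noncomputable section

variable (s t : A →ₗ[k] U) (B : LeftBialgebroid k A U s t)
variable (H : LeftHopfAlgebroid k A U s t B)

/-- abbreviation for the left-multiplication linear map. -/
private abbrev lm (q : U) : U →ₗ[k] U := LinearMap.mul k U q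

/-- abbreviation for the right-multiplication linear map. -/
private abbrev rm (q : U) : U →ₗ[k] U := (LinearMap.mul k U).flip q

/-! #### Relations in the various quotients -/

private lemma t2_rel (a : A) (x y : U) :
    π2 k A U s t ((t a * x) ⊗ₜ[k] y) = π2 k A U s t (x ⊗ₜ[k] (s a * y)) := by
  simp only [π2, Submodule.mkQ_apply]
  rw [Submodule.Quotient.eq]
  exact Submodule.subset_span ⟨a, x, y, rfl⟩

private lemma op_rel (a : A) (x y : U) :
    πOp k A U t ((x * t a) ⊗ₜ[k] y) = πOp k A U t (x ⊗ₜ[k] (t a * y)) := by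
  simp only [πOp, Submodule.mkQ_apply]
  rw [Submodule.Quotient.eq]
  exact Submodule.subset_span ⟨a, x, y, rfl⟩

private lemma t3_rel1 (a : A) (x v w : U) :
    π3 k A U s t ((t a * x) ⊗ₜ[k] (v ⊗ₜ[k] w)) =
      π3 k A U s t (x ⊗ₜ[k] ((s a * v) ⊗ₜ[k] w)) := by
  simp only [π3, Submodule.mkQ_apply]
  rw [Submodule.Quotient.eq]
  exact Submodule.subset_span (Set.mem_union_left _ ⟨a, x, v, w, rfl⟩)

private lemma t3_rel2 (a : A) (x v w : U) :
    π3 k A U s t (x ⊗ₜ[k] ((t a * v) ⊗ₜ[k] w)) =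
      π3 k A U s t (x ⊗ₜ[k] (v ⊗ₜ[k] (s a * w))) := by
  simp only [π3, Submodule.mkQ_apply]
  rw [Submodule.Quotient.eq]
  exact Submodule.subset_span (Set.mem_union_right _ ⟨a, x, v, w, rfl⟩)

private lemma mix_rel1 (a : A) (x v w : U) :
    πMix k A U s t (x ⊗ₜ[k] ((t a * v) ⊗ₜ[k] w)) =
      πMix k A U s t (x ⊗ₜ[k] (v ⊗ₜ[k] (s a * w))) := by
  simp only [πMix, Submodule.mkQ_apply]
  rw [Submodule.Quotient.eq]
  exact Submodule.subset_span (Set.mem_union_left _ ⟨a, x, v, w, rfl⟩)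

private lemma mix_rel2 (a : A) (x v w : U) :
    πMix k A U s t ((x * t a) ⊗ₜ[k] (v ⊗ₜ[k] w)) =
      πMix k A U s t (x ⊗ₜ[k] (v ⊗ₜ[k] (t a * w))) := by
  simp only [πMix, Submodule.mkQ_apply]
  rw [Submodule.Quotient.eq]
  exact Submodule.subset_span (Set.mem_union_right _ ⟨a, x, v, w, rfl⟩)

/-! #### The auxiliary quotient `ZQ` -/

/-- The relations of `U ⊗_A' U ⊗ U` used as an intermediate target: the `⊗_A`-relation
linking legs one and three, and the `⊗_{Aᵒᵖ}`-relation linking legs one and two. -/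
def zRel : Submodule k (U ⊗[k] (U ⊗[k] U)) :=
  Submodule.span k
    ({x | ∃ (a : A) (u v w : U),
        x = (t a * u) ⊗ₜ[k] (v ⊗ₜ[k] w) - u ⊗ₜ[k] (v ⊗ₜ[k] (s a * w))} ∪
     {x | ∃ (a : A) (u v w : U),
        x = (u * t a) ⊗ₜ[k] (v ⊗ₜ[k] w) - u ⊗ₜ[k] ((t a * v) ⊗ₜ[k] w)})

/-- The intermediate quotient. -/
abbrev ZQ := (U ⊗[k] (U ⊗[k] U)) ⧸ zRel k A U s t

/-- The projection onto `ZQ`. -/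
def πZ : U ⊗[k] (U ⊗[k] U) →ₗ[k] ZQ k A U s t := (zRel k A U s t).mkQ

private lemma z_rel1 (a : A) (x v w : U) :
    πZ k A U s t ((t a * x) ⊗ₜ[k] (v ⊗ₜ[k] w)) =
      πZ k A U s t (x ⊗ₜ[k] (v ⊗ₜ[k] (s a * w))) := by
  simp only [πZ, Submodule.mkQ_apply]
  rw [Submodule.Quotient.eq]
  exact Submodule.subset_span (Set.mem_union_left _ ⟨a, x, v, w, rfl⟩)

private lemma z_rel2 (a : A) (x v w : U) :
    πZ k A U s t ((x * t a) ⊗ₜ[k] (v ⊗ₜ[k] w)) =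
      πZ k A U s t (x ⊗ₜ[k] ((t a * v) ⊗ₜ[k] w)) := by
  simp only [πZ, Submodule.mkQ_apply]
  rw [Submodule.Quotient.eq]
  exact Submodule.subset_span (Set.mem_union_right _ ⟨a, x, v, w, rfl⟩)

/-! #### Extensionality helpers -/

private lemma ext_T2 {M : Type*} [AddCommGroup M] [Module k M]
    {f g : T2 k A U s t →ₗ[k] M}
    (hh : ∀ p q : U, f (π2 k A U s t (p ⊗ₜ[k] q)) = g (π2 k A U s t (p ⊗ₜ[k] q))) :
    f = g :=
  Submodule.linearMap_qext _ (TensorProduct.ext' hh)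

private lemma ext_TOp {M : Type*} [AddCommGroup M] [Module k M]
    {f g : TOp k A U t →ₗ[k] M}
    (hh : ∀ p q : U, f (πOp k A U t (p ⊗ₜ[k] q)) = g (πOp k A U t (p ⊗ₜ[k] q))) :
    f = g :=
  Submodule.linearMap_qext _ (TensorProduct.ext' hh)

private lemma ext3_core {M : Type*} [AddCommGroup M] [Module k M]
    {f g : U ⊗[k] (U ⊗[k] U) →ₗ[k] M}
    (hh : ∀ x v w : U, f (x ⊗ₜ[k] (v ⊗ₜ[k] w)) = g (x ⊗ₜ[k] (v ⊗ₜ[k] w))) : f = g := by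
  refine TensorProduct.ext' fun x z => ?_
  induction z using TensorProduct.induction_on with
  | zero => simp
  | tmul v w => exact hh x v w
  | add z₁ z₂ h₁ h₂ => rw [tmul_add, map_add, map_add, h₁, h₂]

private lemma ext_T3 {M : Type*} [AddCommGroup M] [Module k M]
    {f g : T3 k A U s t →ₗ[k] M}
    (hh : ∀ x v w : U, f (π3 k A U s t (x ⊗ₜ[k] (v ⊗ₜ[k] w))) =
      g (π3 k A U s t (x ⊗ₜ[k] (v ⊗ₜ[k] w)))) : f = g :=
  Submodule.linearMap_qext _ (ext3_core k U hh)

private lemma ext_TMix {M : Type*} [AddCommGroup M] [Module k M]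
    {f g : TMix k A U s t →ₗ[k] M}
    (hh : ∀ x v w : U, f (πMix k A U s t (x ⊗ₜ[k] (v ⊗ₜ[k] w))) =
      g (πMix k A U s t (x ⊗ₜ[k] (v ⊗ₜ[k] w)))) : f = g :=
  Submodule.linearMap_qext _ (ext3_core k U hh)

private lemma ext_Z {M : Type*} [AddCommGroup M] [Module k M]
    {f g : ZQ k A U s t →ₗ[k] M}
    (hh : ∀ x v w : U, f (πZ k A U s t (x ⊗ₜ[k] (v ⊗ₜ[k] w))) =
      g (πZ k A U s t (x ⊗ₜ[k] (v ⊗ₜ[k] w)))) : f = g :=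
  Submodule.linearMap_qext _ (ext3_core k U hh)


set_option linter.unusedSectionVars false

include s t B H

/-! #### Basic consequences of the axioms -/

private lemma mulSnd_one : H.mulSnd 1 = LinearMap.id := by
  refine ext_T2 k A U s t fun p q => ?_
  rw [H.mulSnd_eq, mul_one, LinearMap.id_apply]

private lemma mulSnd_mul (y d : U) :
    H.mulSnd (y * d) = (H.mulSnd d) ∘ₗ (H.mulSnd y) := by
  refine ext_T2 k A U s t fun p q => ?_
  rw [LinearMap.comp_apply, H.mulSnd_eq, H.mulSnd_eq, H.mulSnd_eq, mul_assoc]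

private lemma pi2_mulSnd (p q : U) :
    π2 k A U s t (p ⊗ₜ[k] q) = H.mulSnd q (π2 k A U s t (p ⊗ₜ[k] 1)) := by
  rw [H.mulSnd_eq, one_mul]

private lemma delta_t (a : A) :
    B.Δ (t a) = π2 k A U s t ((1 : U) ⊗ₜ[k] t a) := by
  have h0 : πOp k A U t (((1 : U) * t a) ⊗ₜ[k] (1 : U)) =
      πOp k A U t ((1 : U) ⊗ₜ[k] (t a * 1)) := op_rel k A U t a 1 1
  rw [one_mul, mul_one] at h0
  have h1 := congrArg H.β h0
  rw [H.β_eq, H.β_eq, mulSnd_one k A U s t B H, LinearMap.id_apply, B.Δ_one,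
    H.mulSnd_eq, one_mul] at h1
  exact h1

private lemma mulT_pi2 (ω ω' : U ⊗[k] U) :
    B.mulT ω (π2 k A U s t ω') = π2 k A U s t (ω' * ω) := by
  induction ω using TensorProduct.induction_on with
  | zero => simp
  | tmul x y =>
    induction ω' using TensorProduct.induction_on with
    | zero => simp
    | tmul p q => rw [B.mulT_eq, Algebra.TensorProduct.tmul_mul_tmul]
    | add ω₁ ω₂ h₁ h₂ => rw [map_add, map_add, h₁, h₂, add_mul, map_add]
  | add ω₁ ω₂ h₁ h₂ =>
    rw [map_add, LinearMap.add_apply, h₁, h₂, mul_add, map_add]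

private lemma delta_mul_t (x : U) (a : A) :
    B.Δ (x * t a) = H.mulSnd (t a) (B.Δ x) := by
  have h1 : B.mulT ((1 : U) ⊗ₜ[k] t a) = H.mulSnd (t a) := by
    refine ext_T2 k A U s t fun p q => ?_
    rw [B.mulT_eq, H.mulSnd_eq, mul_one]
  rw [B.Δ_mul x (t a) ((1 : U) ⊗ₜ[k] t a) (delta_t k A U s t B H a).symm, h1]

/-- Left multiplication by `t a` on the second leg of `T2`. -/
def lmulSnd (a : A) : T2 k A U s t →ₗ[k] T2 k A U s t :=
  Submodule.liftQ _ ((π2 k A U s t) ∘ₗ LinearMap.lTensor U (lm k U (t a))) (by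
    refine Submodule.span_le.2 ?_
    rintro x ⟨b, p, q, rfl⟩
    simp only [SetLike.mem_coe, LinearMap.mem_ker, map_sub, LinearMap.comp_apply,
      LinearMap.lTensor_tmul, LinearMap.mul_apply']
    rw [sub_eq_zero, t2_rel k A U s t b p (t a * q), ← mul_assoc, ← mul_assoc,
      B.st_comm])

private lemma lmulSnd_eq (a : A) (p q : U) :
    lmulSnd k A U s t B a (π2 k A U s t (p ⊗ₜ[k] q)) = π2 k A U s t (p ⊗ₜ[k] (t a * q)) := by
  simp only [lmulSnd, π2, Submodule.mkQ_apply, Submodule.liftQ_apply, LinearMap.comp_apply,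
    LinearMap.lTensor_tmul, LinearMap.mul_apply']

private lemma pi2_one_tmul_t (a : A) (ω : U ⊗[k] U) :
    π2 k A U s t (((1 : U) ⊗ₜ[k] t a) * ω) = lmulSnd k A U s t B a (π2 k A U s t ω) := by
  induction ω using TensorProduct.induction_on with
  | zero => simp
  | tmul p q =>
    rw [Algebra.TensorProduct.tmul_mul_tmul, one_mul, lmulSnd_eq k A U s t B H]
  | add ω₁ ω₂ h₁ h₂ => rw [mul_add, map_add, h₁, h₂, map_add, map_add]

private lemma delta_t_mul (a : A) (x : U) :
    B.Δ (t a * x) = lmulSnd k A U s t B a (B.Δ x) := by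
  obtain ⟨ω, hω⟩ := Submodule.mkQ_surjective (bgdRel k A U s t) (B.Δ x)
  have hπ : π2 k A U s t ω = B.Δ x := hω
  rw [B.Δ_mul (t a) x ω hπ, delta_t k A U s t B H, mulT_pi2 k A U s t B H, ← hπ,
    pi2_one_tmul_t k A U s t B H]

/-- Right multiplication on the second leg of `TOp`. -/
def mulSndOp (d : U) : TOp k A U t →ₗ[k] TOp k A U t :=
  Submodule.liftQ _ ((πOp k A U t) ∘ₗ LinearMap.lTensor U (rm k U d)) (by
    refine Submodule.span_le.2 ?_
    rintro x ⟨a, p, q, rfl⟩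
    simp only [SetLike.mem_coe, LinearMap.mem_ker, map_sub, LinearMap.comp_apply,
      LinearMap.lTensor_tmul, LinearMap.flip_apply, LinearMap.mul_apply']
    rw [sub_eq_zero, op_rel k A U t a p (q * d), mul_assoc])

private lemma mulSndOp_eq (d p q : U) :
    mulSndOp k A U t d (πOp k A U t (p ⊗ₜ[k] q)) = πOp k A U t (p ⊗ₜ[k] (q * d)) := by
  simp only [mulSndOp, πOp, Submodule.mkQ_apply, Submodule.liftQ_apply, LinearMap.comp_apply,
    LinearMap.lTensor_tmul, LinearMap.flip_apply, LinearMap.mul_apply']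

/-- Left multiplication by `s a` on the second leg of `TOp`. -/
def nMap (a : A) : TOp k A U t →ₗ[k] TOp k A U t :=
  Submodule.liftQ _ ((πOp k A U t) ∘ₗ LinearMap.lTensor U (lm k U (s a))) (by
    refine Submodule.span_le.2 ?_
    rintro x ⟨b, p, q, rfl⟩
    simp only [SetLike.mem_coe, LinearMap.mem_ker, map_sub, LinearMap.comp_apply,
      LinearMap.lTensor_tmul, LinearMap.mul_apply']
    rw [sub_eq_zero, op_rel k A U t b p (s a * q), ← mul_assoc, ← mul_assoc, B.st_comm])

private lemma nMap_eq (a : A) (p q : U) :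
    nMap k A U s t B a (πOp k A U t (p ⊗ₜ[k] q)) = πOp k A U t (p ⊗ₜ[k] (s a * q)) := by
  simp only [nMap, πOp, Submodule.mkQ_apply, Submodule.liftQ_apply, LinearMap.comp_apply,
    LinearMap.lTensor_tmul, LinearMap.mul_apply']

/-- Left multiplication by `t a` on the first leg of `TOp`. -/
def oMap (a : A) : TOp k A U t →ₗ[k] TOp k A U t :=
  Submodule.liftQ _ ((πOp k A U t) ∘ₗ LinearMap.rTensor U (lm k U (t a))) (by
    refine Submodule.span_le.2 ?_
    rintro x ⟨b, p, q, rfl⟩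
    simp only [SetLike.mem_coe, LinearMap.mem_ker, map_sub, LinearMap.comp_apply,
      LinearMap.rTensor_tmul, LinearMap.mul_apply']
    rw [sub_eq_zero, ← mul_assoc]
    exact op_rel k A U t b (t a * p) q)

private lemma oMap_eq (a : A) (p q : U) :
    oMap k A U t a (πOp k A U t (p ⊗ₜ[k] q)) = πOp k A U t ((t a * p) ⊗ₜ[k] q) := by
  simp only [oMap, πOp, Submodule.mkQ_apply, Submodule.liftQ_apply, LinearMap.comp_apply,
    LinearMap.rTensor_tmul, LinearMap.mul_apply']


/-! #### Properties of the translation map -/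

private lemma beta_inv_delta (x : U) :
    H.βinv (B.Δ x) = πOp k A U t (x ⊗ₜ[k] 1) := by
  have h := LinearMap.congr_fun H.β_left_inv (πOp k A U t (x ⊗ₜ[k] 1))
  rw [LinearMap.comp_apply, LinearMap.id_apply, H.β_eq,
    mulSnd_one k A U s t B H, LinearMap.id_apply] at h
  exact h

private lemma beta_mulSndOp (d : U) :
    H.β ∘ₗ mulSndOp k A U t d = H.mulSnd d ∘ₗ H.β := by
  refine ext_TOp k A U t fun p q => ?_
  rw [LinearMap.comp_apply, LinearMap.comp_apply, mulSndOp_eq k A U s t B H,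
    H.β_eq, H.β_eq, mulSnd_mul k A U s t B H, LinearMap.comp_apply]

private lemma betaInv_mulSnd (d : U) (ξ : T2 k A U s t) :
    H.βinv (H.mulSnd d ξ) = mulSndOp k A U t d (H.βinv ξ) := by
  have h0 := LinearMap.congr_fun H.β_right_inv ξ
  rw [LinearMap.comp_apply, LinearMap.id_apply] at h0
  have h1 := LinearMap.congr_fun (beta_mulSndOp k A U s t B H d) (H.βinv ξ)
  rw [LinearMap.comp_apply, LinearMap.comp_apply, h0] at h1
  have h2 := congrArg H.βinv h1
  have h3 := LinearMap.congr_fun H.β_left_inv (mulSndOp k A U t d (H.βinv ξ))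
  rw [LinearMap.comp_apply, LinearMap.id_apply] at h3
  rw [h3] at h2
  exact h2.symm

private lemma betaInv_pi2 (p q : U) :
    H.βinv (π2 k A U s t (p ⊗ₜ[k] q)) =
      mulSndOp k A U t q (H.βinv (π2 k A U s t (p ⊗ₜ[k] 1))) := by
  rw [pi2_mulSnd k A U s t B H p q]
  exact betaInv_mulSnd k A U s t B H q _

/-- The translation map `u ↦ u₊ ⊗ u₋` as a linear map. -/
def eTmap : U →ₗ[k] TOp k A U t :=
  H.βinv ∘ₗ (π2 k A U s t) ∘ₗ ((TensorProduct.mk k U U).flip 1)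

private lemma eTmap_apply (x : U) :
    eTmap k A U s t B H x = H.βinv (π2 k A U s t (x ⊗ₜ[k] 1)) := rfl

private lemma beta_eT (x : U) :
    H.β (eTmap k A U s t B H x) = π2 k A U s t (x ⊗ₜ[k] 1) := by
  rw [eTmap_apply]
  have h := LinearMap.congr_fun H.β_right_inv (π2 k A U s t (x ⊗ₜ[k] 1))
  rw [LinearMap.comp_apply, LinearMap.id_apply] at h
  exact h

private lemma eT_t_mul (a : A) (x : U) :
    eTmap k A U s t B H (t a * x) = mulSndOp k A U t (s a) (eTmap k A U s t B H x) := by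
  rw [eTmap_apply, eTmap_apply, t2_rel k A U s t a x 1, mul_one,
    betaInv_pi2 k A U s t B H]

private lemma lmulSnd_mulSnd (a : A) (d : U) :
    H.mulSnd d ∘ₗ lmulSnd k A U s t B a = lmulSnd k A U s t B a ∘ₗ H.mulSnd d := by
  refine ext_T2 k A U s t fun p q => ?_
  rw [LinearMap.comp_apply, LinearMap.comp_apply, lmulSnd_eq k A U s t B H,
    H.mulSnd_eq, H.mulSnd_eq, lmulSnd_eq k A U s t B H, mul_assoc]

private lemma beta_oMap (a : A) :
    H.β ∘ₗ oMap k A U t a = lmulSnd k A U s t B a ∘ₗ H.β := by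
  refine ext_TOp k A U t fun p q => ?_
  rw [LinearMap.comp_apply, LinearMap.comp_apply, oMap_eq k A U s t B H, H.β_eq,
    delta_t_mul k A U s t B H, H.β_eq]
  exact LinearMap.congr_fun (lmulSnd_mulSnd k A U s t B H a q) (B.Δ p)

private lemma eT_oMap (a : A) (x : U) :
    oMap k A U t a (eTmap k A U s t B H x) =
      mulSndOp k A U t (t a) (eTmap k A U s t B H x) := by
  have h1 : H.β (oMap k A U t a (eTmap k A U s t B H x)) =
      H.β (mulSndOp k A U t (t a) (eTmap k A U s t B H x)) := by
    have l := LinearMap.congr_fun (beta_oMap k A U s t B H a) (eTmap k A U s t B H x)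
    have r := LinearMap.congr_fun (beta_mulSndOp k A U s t B H (t a))
      (eTmap k A U s t B H x)
    rw [LinearMap.comp_apply, LinearMap.comp_apply] at l r
    rw [l, r, beta_eT k A U s t B H, lmulSnd_eq k A U s t B H, H.mulSnd_eq,
      mul_one, one_mul]
  have h2 := congrArg H.βinv h1
  have h3 := LinearMap.congr_fun H.β_left_inv (oMap k A U t a (eTmap k A U s t B H x))
  have h4 := LinearMap.congr_fun H.β_left_inv
    (mulSndOp k A U t (t a) (eTmap k A U s t B H x))
  rw [LinearMap.comp_apply, LinearMap.id_apply] at h3 h4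
  rw [h3, h4] at h2
  exact h2

private lemma mulSnd_sa (a : A) : H.mulSnd (s a) = B.actR a := by
  refine ext_T2 k A U s t fun p q => ?_
  rw [H.mulSnd_eq, B.actR_eq]

private lemma actL_mulSnd (a : A) (q : U) :
    B.actL a ∘ₗ H.mulSnd q = H.mulSnd q ∘ₗ B.actL a := by
  refine ext_T2 k A U s t fun p r => ?_
  rw [LinearMap.comp_apply, LinearMap.comp_apply, H.mulSnd_eq, B.actL_eq,
    B.actL_eq, H.mulSnd_eq]

private lemma beta_nMap (a : A) :
    H.β ∘ₗ nMap k A U s t B a = B.actL a ∘ₗ H.β := by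
  refine ext_TOp k A U t fun p q => ?_
  rw [LinearMap.comp_apply, LinearMap.comp_apply, nMap_eq k A U s t B H, H.β_eq,
    H.β_eq, mulSnd_mul k A U s t B H, LinearMap.comp_apply,
    mulSnd_sa k A U s t B H, ← B.takeuchi]
  exact (LinearMap.congr_fun (actL_mulSnd k A U s t B H a q) (B.Δ p)).symm

private lemma eT_mul_t (a : A) (x : U) :
    eTmap k A U s t B H (x * t a) = nMap k A U s t B a (eTmap k A U s t B H x) := by
  have h1 : H.β (eTmap k A U s t B H (x * t a)) =
      H.β (nMap k A U s t B a (eTmap k A U s t B H x)) := by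
    have r := LinearMap.congr_fun (beta_nMap k A U s t B H a) (eTmap k A U s t B H x)
    rw [LinearMap.comp_apply, LinearMap.comp_apply] at r
    rw [beta_eT k A U s t B H, r, beta_eT k A U s t B H, B.actL_eq]
  have h2 := congrArg H.βinv h1
  have h3 := LinearMap.congr_fun H.β_left_inv (eTmap k A U s t B H (x * t a))
  have h4 := LinearMap.congr_fun H.β_left_inv
    (nMap k A U s t B a (eTmap k A U s t B H x))
  rw [LinearMap.comp_apply, LinearMap.id_apply] at h3 h4
  rw [h3, h4] at h2
  exact h2


/-! #### Bilinear insertion maps -/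

/-- `(p ⊗ q, v ⊗ w) ↦ p ⊗ (v ⊗ q w)`. -/
def core3 : (U ⊗[k] U) →ₗ[k] (U ⊗[k] U) →ₗ[k] (U ⊗[k] (U ⊗[k] U)) :=
  TensorProduct.lift (LinearMap.mk₂ k
    (fun p q => (TensorProduct.mk k U (U ⊗[k] U) p) ∘ₗ (LinearMap.lTensor U (lm k U q)))
    (fun p₁ p₂ q => TensorProduct.ext' fun v w => by
      simp only [LinearMap.comp_apply, LinearMap.lTensor_tmul, LinearMap.mul_apply',
        TensorProduct.mk_apply, LinearMap.add_apply, map_add, add_mul, add_tmul, tmul_add])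
    (fun c p q => TensorProduct.ext' fun v w => by
      simp only [LinearMap.comp_apply, LinearMap.lTensor_tmul, LinearMap.mul_apply',
        TensorProduct.mk_apply, LinearMap.smul_apply, map_smul, smul_mul_assoc,
        ← smul_tmul', tmul_smul])
    (fun p q₁ q₂ => TensorProduct.ext' fun v w => by
      simp only [LinearMap.comp_apply, LinearMap.lTensor_tmul, LinearMap.mul_apply',
        TensorProduct.mk_apply, LinearMap.add_apply, map_add, add_mul, add_tmul, tmul_add])
    (fun c p q => TensorProduct.ext' fun v w => by
      simp only [LinearMap.comp_apply, LinearMap.lTensor_tmul, LinearMap.mul_apply',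
        TensorProduct.mk_apply, LinearMap.smul_apply, map_smul, smul_mul_assoc,
        ← smul_tmul', tmul_smul]))

omit s t B H in
private lemma core3_apply (p q v w : U) :
    core3 k U (p ⊗ₜ[k] q) (v ⊗ₜ[k] w) = p ⊗ₜ[k] (v ⊗ₜ[k] (q * w)) := by
  rw [core3, TensorProduct.lift.tmul, LinearMap.mk₂_apply, LinearMap.comp_apply,
    LinearMap.lTensor_tmul, LinearMap.mul_apply', TensorProduct.mk_apply]

/-- `(p ⊗ q, v ⊗ w) ↦ p ⊗ ((q v) ⊗ w)`. -/
def core2 : (U ⊗[k] U) →ₗ[k] (U ⊗[k] U) →ₗ[k] (U ⊗[k] (U ⊗[k] U)) :=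
  TensorProduct.lift (LinearMap.mk₂ k
    (fun p q => (TensorProduct.mk k U (U ⊗[k] U) p) ∘ₗ (LinearMap.rTensor U (lm k U q)))
    (fun p₁ p₂ q => TensorProduct.ext' fun v w => by
      simp only [LinearMap.comp_apply, LinearMap.rTensor_tmul, LinearMap.mul_apply',
        TensorProduct.mk_apply, LinearMap.add_apply, map_add, add_mul, add_tmul, tmul_add])
    (fun c p q => TensorProduct.ext' fun v w => by
      simp only [LinearMap.comp_apply, LinearMap.rTensor_tmul, LinearMap.mul_apply',
        TensorProduct.mk_apply, LinearMap.smul_apply, map_smul, smul_mul_assoc,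
        ← smul_tmul', tmul_smul])
    (fun p q₁ q₂ => TensorProduct.ext' fun v w => by
      simp only [LinearMap.comp_apply, LinearMap.rTensor_tmul, LinearMap.mul_apply',
        TensorProduct.mk_apply, LinearMap.add_apply, map_add, add_mul, add_tmul, tmul_add])
    (fun c p q => TensorProduct.ext' fun v w => by
      simp only [LinearMap.comp_apply, LinearMap.rTensor_tmul, LinearMap.mul_apply',
        TensorProduct.mk_apply, LinearMap.smul_apply, map_smul, smul_mul_assoc,
        ← smul_tmul', tmul_smul]))

omit s t B H in
private lemma core2_apply (p q v w : U) :
    core2 k U (p ⊗ₜ[k] q) (v ⊗ₜ[k] w) = p ⊗ₜ[k] ((q * v) ⊗ₜ[k] w) := by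
  rw [core2, TensorProduct.lift.tmul, LinearMap.mk₂_apply, LinearMap.comp_apply,
    LinearMap.rTensor_tmul, LinearMap.mul_apply', TensorProduct.mk_apply]

/-- `hmap : (p ⊗_A q, v ⊗ w) ↦ πZ (p ⊗ (v ⊗ q w))`. -/
def hmap : T2 k A U s t →ₗ[k] (U ⊗[k] U) →ₗ[k] ZQ k A U s t :=
  Submodule.liftQ _
    ((LinearMap.llcomp k (U ⊗[k] U) (U ⊗[k] (U ⊗[k] U)) (ZQ k A U s t)
      (πZ k A U s t)) ∘ₗ core3 k U) (by
    refine Submodule.span_le.2 ?_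
    rintro x ⟨a, p, q, rfl⟩
    simp only [SetLike.mem_coe, LinearMap.mem_ker, map_sub]
    rw [sub_eq_zero]
    refine TensorProduct.ext' fun v w => ?_
    simp only [LinearMap.comp_apply, LinearMap.llcomp_apply, core3_apply]
    rw [z_rel1 k A U s t a p v (q * w), mul_assoc])

omit B H in
private lemma hmap_eq (p q v w : U) :
    hmap k A U s t (π2 k A U s t (p ⊗ₜ[k] q)) (v ⊗ₜ[k] w) =
      πZ k A U s t (p ⊗ₜ[k] (v ⊗ₜ[k] (q * w))) := by
  simp only [hmap, π2, Submodule.mkQ_apply, Submodule.liftQ_apply, LinearMap.comp_apply,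
    LinearMap.llcomp_apply, core3_apply]
  rfl

/-- `gmap : (p ⊗_{Aᵒᵖ} q, v ⊗ w) ↦ πMix (p ⊗ (v ⊗ q w))`. -/
def gmap : TOp k A U t →ₗ[k] (U ⊗[k] U) →ₗ[k] TMix k A U s t :=
  Submodule.liftQ _
    ((LinearMap.llcomp k (U ⊗[k] U) (U ⊗[k] (U ⊗[k] U)) (TMix k A U s t)
      (πMix k A U s t)) ∘ₗ core3 k U) (by
    refine Submodule.span_le.2 ?_
    rintro x ⟨a, p, q, rfl⟩
    simp only [SetLike.mem_coe, LinearMap.mem_ker, map_sub]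
    rw [sub_eq_zero]
    refine TensorProduct.ext' fun v w => ?_
    simp only [LinearMap.comp_apply, LinearMap.llcomp_apply, core3_apply]
    rw [mix_rel2 k A U s t a p v (q * w), mul_assoc])

omit B H in
private lemma gmap_eq (p q v w : U) :
    gmap k A U s t (πOp k A U t (p ⊗ₜ[k] q)) (v ⊗ₜ[k] w) =
      πMix k A U s t (p ⊗ₜ[k] (v ⊗ₜ[k] (q * w))) := by
  simp only [gmap, πOp, Submodule.mkQ_apply, Submodule.liftQ_apply, LinearMap.comp_apply,
    LinearMap.llcomp_apply, core3_apply]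
  rfl

/-- `h₂map : (p ⊗_A q, v ⊗ w) ↦ π3 (p ⊗ ((q v) ⊗ w))`. -/
def h₂map : T2 k A U s t →ₗ[k] (U ⊗[k] U) →ₗ[k] T3 k A U s t :=
  Submodule.liftQ _
    ((LinearMap.llcomp k (U ⊗[k] U) (U ⊗[k] (U ⊗[k] U)) (T3 k A U s t)
      (π3 k A U s t)) ∘ₗ core2 k U) (by
    refine Submodule.span_le.2 ?_
    rintro x ⟨a, p, q, rfl⟩
    simp only [SetLike.mem_coe, LinearMap.mem_ker, map_sub]
    rw [sub_eq_zero]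
    refine TensorProduct.ext' fun v w => ?_
    simp only [LinearMap.comp_apply, LinearMap.llcomp_apply, core2_apply]
    rw [t3_rel1 k A U s t a p (q * v) w, mul_assoc])

omit B H in
private lemma h₂map_eq (p q v w : U) :
    h₂map k A U s t (π2 k A U s t (p ⊗ₜ[k] q)) (v ⊗ₜ[k] w) =
      π3 k A U s t (p ⊗ₜ[k] ((q * v) ⊗ₜ[k] w)) := by
  simp only [h₂map, π2, Submodule.mkQ_apply, Submodule.liftQ_apply, LinearMap.comp_apply,
    LinearMap.llcomp_apply, core2_apply]
  rfl

/-- `g₂map : (p ⊗_{Aᵒᵖ} q, v ⊗ w) ↦ πZ (p ⊗ ((q v) ⊗ w))`. -/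
def g₂map : TOp k A U t →ₗ[k] (U ⊗[k] U) →ₗ[k] ZQ k A U s t :=
  Submodule.liftQ _
    ((LinearMap.llcomp k (U ⊗[k] U) (U ⊗[k] (U ⊗[k] U)) (ZQ k A U s t)
      (πZ k A U s t)) ∘ₗ core2 k U) (by
    refine Submodule.span_le.2 ?_
    rintro x ⟨a, p, q, rfl⟩
    simp only [SetLike.mem_coe, LinearMap.mem_ker, map_sub]
    rw [sub_eq_zero]
    refine TensorProduct.ext' fun v w => ?_
    simp only [LinearMap.comp_apply, LinearMap.llcomp_apply, core2_apply]
    rw [z_rel2 k A U s t a p (q * v) w, mul_assoc])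

omit B H in
private lemma g₂map_eq (p q v w : U) :
    g₂map k A U s t (πOp k A U t (p ⊗ₜ[k] q)) (v ⊗ₜ[k] w) =
      πZ k A U s t (p ⊗ₜ[k] ((q * v) ⊗ₜ[k] w)) := by
  simp only [g₂map, πOp, Submodule.mkQ_apply, Submodule.liftQ_apply, LinearMap.comp_apply,
    LinearMap.llcomp_apply, core2_apply]
  rfl

/-! #### Commutation identities for the insertion maps -/

private lemma hmap_actL (a : A) (v w : U) :
    (hmap k A U s t).flip ((t a * v) ⊗ₜ[k] w) =
      ((hmap k A U s t).flip (v ⊗ₜ[k] w)) ∘ₗ B.actL a := by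
  refine ext_T2 k A U s t fun p q => ?_
  rw [LinearMap.flip_apply, LinearMap.comp_apply, B.actL_eq, LinearMap.flip_apply,
    hmap_eq, hmap_eq, ← z_rel2 k A U s t a p v (q * w)]

private lemma hmap_actR (a : A) (v w : U) :
    (hmap k A U s t).flip (v ⊗ₜ[k] (s a * w)) =
      ((hmap k A U s t).flip (v ⊗ₜ[k] w)) ∘ₗ B.actR a := by
  refine ext_T2 k A U s t fun p q => ?_
  rw [LinearMap.flip_apply, LinearMap.comp_apply, B.actR_eq, LinearMap.flip_apply,
    hmap_eq, hmap_eq, mul_assoc]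

private lemma hmap_mulSnd (d v w : U) :
    ((hmap k A U s t).flip (v ⊗ₜ[k] w)) ∘ₗ H.mulSnd d =
      (hmap k A U s t).flip (v ⊗ₜ[k] (d * w)) := by
  refine ext_T2 k A U s t fun p q => ?_
  rw [LinearMap.comp_apply, H.mulSnd_eq, LinearMap.flip_apply, LinearMap.flip_apply,
    hmap_eq, hmap_eq, mul_assoc]

private lemma gmap_mulSndOp (d v w : U) :
    ((gmap k A U s t).flip (v ⊗ₜ[k] w)) ∘ₗ mulSndOp k A U t d =
      (gmap k A U s t).flip (v ⊗ₜ[k] (d * w)) := by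
  refine ext_TOp k A U t fun p q => ?_
  rw [LinearMap.comp_apply, mulSndOp_eq k A U s t B H, LinearMap.flip_apply,
    LinearMap.flip_apply, gmap_eq, gmap_eq, mul_assoc]

private lemma gmap_nMap (a : A) (v w : U) :
    ((gmap k A U s t).flip (v ⊗ₜ[k] w)) ∘ₗ nMap k A U s t B a =
      (gmap k A U s t).flip ((t a * v) ⊗ₜ[k] w) := by
  refine ext_TOp k A U t fun p q => ?_
  rw [LinearMap.comp_apply, nMap_eq k A U s t B H, LinearMap.flip_apply,
    LinearMap.flip_apply, gmap_eq, gmap_eq, mix_rel1 k A U s t a p v (q * w),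
    ← mul_assoc]

private lemma h₂_lmulSnd (a : A) (v w : U) :
    ((h₂map k A U s t).flip (v ⊗ₜ[k] w)) ∘ₗ lmulSnd k A U s t B a =
      (h₂map k A U s t).flip (v ⊗ₜ[k] (s a * w)) := by
  refine ext_T2 k A U s t fun p q => ?_
  rw [LinearMap.comp_apply, lmulSnd_eq k A U s t B H, LinearMap.flip_apply,
    LinearMap.flip_apply, h₂map_eq, h₂map_eq, mul_assoc,
    t3_rel2 k A U s t a p (q * v) w]

private lemma h₂_mulSnd (d v w : U) :
    ((h₂map k A U s t).flip (v ⊗ₜ[k] w)) ∘ₗ H.mulSnd d =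
      (h₂map k A U s t).flip ((d * v) ⊗ₜ[k] w) := by
  refine ext_T2 k A U s t fun p q => ?_
  rw [LinearMap.comp_apply, H.mulSnd_eq, LinearMap.flip_apply, LinearMap.flip_apply,
    h₂map_eq, h₂map_eq, mul_assoc]

private lemma g₂_mulSndOp (d v w : U) :
    ((g₂map k A U s t).flip (v ⊗ₜ[k] w)) ∘ₗ mulSndOp k A U t d =
      (g₂map k A U s t).flip ((d * v) ⊗ₜ[k] w) := by
  refine ext_TOp k A U t fun p q => ?_
  rw [LinearMap.comp_apply, mulSndOp_eq k A U s t B H, LinearMap.flip_apply,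
    LinearMap.flip_apply, g₂map_eq, g₂map_eq, mul_assoc]

private lemma g₂_oMap (a : A) (v w : U) :
    ((g₂map k A U s t).flip (v ⊗ₜ[k] w)) ∘ₗ oMap k A U t a =
      (g₂map k A U s t).flip (v ⊗ₜ[k] (s a * w)) := by
  refine ext_TOp k A U t fun p q => ?_
  rw [LinearMap.comp_apply, oMap_eq k A U s t B H, LinearMap.flip_apply,
    LinearMap.flip_apply, g₂map_eq, g₂map_eq, z_rel1 k A U s t a p (q * v) w]


/-! #### The maps `θ`, `θ'`, `β₁₂`, `W` -/

/-- `θ : TMix → ZQ`, `x ⊗ v ⊗ w ↦ x₍₁₎ ⊗ v ⊗ x₍₂₎ w`. -/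
def θmap : TMix k A U s t →ₗ[k] ZQ k A U s t :=
  Submodule.liftQ _ (TensorProduct.lift ((hmap k A U s t) ∘ₗ B.Δ)) (by
    refine Submodule.span_le.2 ?_
    rintro x (⟨a, u, v, w, rfl⟩ | ⟨a, u, v, w, rfl⟩) <;>
      simp only [SetLike.mem_coe, LinearMap.mem_ker, map_sub, TensorProduct.lift.tmul,
        LinearMap.comp_apply] <;> rw [sub_eq_zero]
    · have h1 := LinearMap.congr_fun (hmap_actL k A U s t B H a v w) (B.Δ u)
      have h2 := LinearMap.congr_fun (hmap_actR k A U s t B H a v w) (B.Δ u)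
      rw [LinearMap.flip_apply, LinearMap.comp_apply, LinearMap.flip_apply] at h1 h2
      rw [h1, h2, B.takeuchi]
    · have h3 := LinearMap.congr_fun (hmap_mulSnd k A U s t B H (t a) v w) (B.Δ u)
      rw [LinearMap.comp_apply, LinearMap.flip_apply, LinearMap.flip_apply] at h3
      rw [delta_mul_t k A U s t B H, h3])

private lemma θmap_eq (x v w : U) :
    θmap k A U s t B H (πMix k A U s t (x ⊗ₜ[k] (v ⊗ₜ[k] w))) =
      hmap k A U s t (B.Δ x) (v ⊗ₜ[k] w) := by
  simp only [θmap, πMix, Submodule.mkQ_apply, Submodule.liftQ_apply,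
    TensorProduct.lift.tmul, LinearMap.comp_apply]
  rfl

/-- `θ' : ZQ → TMix`, `x ⊗ v ⊗ w ↦ x₊ ⊗ v ⊗ x₋ w`. -/
def θ'map : ZQ k A U s t →ₗ[k] TMix k A U s t :=
  Submodule.liftQ _
    (TensorProduct.lift ((gmap k A U s t) ∘ₗ eTmap k A U s t B H)) (by
    refine Submodule.span_le.2 ?_
    rintro x (⟨a, u, v, w, rfl⟩ | ⟨a, u, v, w, rfl⟩) <;>
      simp only [SetLike.mem_coe, LinearMap.mem_ker, map_sub, TensorProduct.lift.tmul,
        LinearMap.comp_apply] <;> rw [sub_eq_zero]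
    · have h1 := LinearMap.congr_fun (gmap_mulSndOp k A U s t B H (s a) v w)
        (eTmap k A U s t B H u)
      rw [LinearMap.comp_apply, LinearMap.flip_apply, LinearMap.flip_apply] at h1
      rw [eT_t_mul k A U s t B H, h1]
    · have h1 := LinearMap.congr_fun (gmap_nMap k A U s t B H a v w)
        (eTmap k A U s t B H u)
      rw [LinearMap.comp_apply, LinearMap.flip_apply, LinearMap.flip_apply] at h1
      rw [eT_mul_t k A U s t B H, h1])

private lemma θ'map_eq (x v w : U) :
    θ'map k A U s t B H (πZ k A U s t (x ⊗ₜ[k] (v ⊗ₜ[k] w))) =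
      gmap k A U s t (eTmap k A U s t B H x) (v ⊗ₜ[k] w) := by
  simp only [θ'map, πZ, Submodule.mkQ_apply, Submodule.liftQ_apply,
    TensorProduct.lift.tmul, LinearMap.comp_apply]
  rfl

private lemma theta'_theta : θ'map k A U s t B H ∘ₗ θmap k A U s t B H = LinearMap.id := by
  refine ext_TMix k A U s t fun x v w => ?_
  have key : θ'map k A U s t B H ∘ₗ ((hmap k A U s t).flip (v ⊗ₜ[k] w)) =
      ((gmap k A U s t).flip (v ⊗ₜ[k] w)) ∘ₗ H.βinv := by
    refine ext_T2 k A U s t fun p q => ?_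
    rw [LinearMap.comp_apply, LinearMap.flip_apply, hmap_eq, θ'map_eq,
      LinearMap.comp_apply, LinearMap.flip_apply, betaInv_pi2 k A U s t B H,
      ← eTmap_apply k A U s t B H]
    have h1 := LinearMap.congr_fun (gmap_mulSndOp k A U s t B H q v w)
      (eTmap k A U s t B H p)
    rw [LinearMap.comp_apply, LinearMap.flip_apply, LinearMap.flip_apply] at h1
    rw [h1]
  have h2 := LinearMap.congr_fun key (B.Δ x)
  rw [LinearMap.comp_apply, LinearMap.flip_apply, LinearMap.comp_apply,
    LinearMap.flip_apply, beta_inv_delta k A U s t B H, gmap_eq, one_mul] at h2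
  rw [LinearMap.comp_apply, LinearMap.id_apply, θmap_eq, h2]

/-! #### Multiplication on the last two legs of `T3` -/

private lemma t3_rel1' (a : A) (x : U) (η : U ⊗[k] U) :
    π3 k A U s t ((t a * x) ⊗ₜ[k] η) =
      π3 k A U s t (x ⊗ₜ[k] ((s a ⊗ₜ[k] (1 : U)) * η)) := by
  induction η using TensorProduct.induction_on with
  | zero => simp
  | tmul v w => rw [Algebra.TensorProduct.tmul_mul_tmul, one_mul, t3_rel1 k A U s t]
  | add η₁ η₂ h₁ h₂ => rw [tmul_add, map_add, h₁, h₂, mul_add, tmul_add, map_add]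

private lemma t3_rel2' (x : U) (a : A) (η : U ⊗[k] U) :
    π3 k A U s t (x ⊗ₜ[k] ((t a ⊗ₜ[k] (1 : U)) * η)) =
      π3 k A U s t (x ⊗ₜ[k] (((1 : U) ⊗ₜ[k] s a) * η)) := by
  induction η using TensorProduct.induction_on with
  | zero => simp
  | tmul v w =>
    rw [Algebra.TensorProduct.tmul_mul_tmul, Algebra.TensorProduct.tmul_mul_tmul,
      one_mul, one_mul, t3_rel2 k A U s t]
  | add η₁ η₂ h₁ h₂ =>
    rw [mul_add, tmul_add, map_add, h₁, h₂, mul_add, tmul_add, map_add]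

/-- Right multiplication by `ω` on the two last legs of `T3`. -/
def mul23 (ω : U ⊗[k] U) : T3 k A U s t →ₗ[k] T3 k A U s t :=
  Submodule.liftQ _
    ((π3 k A U s t) ∘ₗ LinearMap.lTensor U ((LinearMap.mul k (U ⊗[k] U)).flip ω)) (by
    refine Submodule.span_le.2 ?_
    rintro x (⟨a, u, v, w, rfl⟩ | ⟨a, u, v, w, rfl⟩) <;>
      simp only [SetLike.mem_coe, LinearMap.mem_ker, map_sub, LinearMap.comp_apply,
        LinearMap.lTensor_tmul, LinearMap.flip_apply, LinearMap.mul_apply'] <;>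
      rw [sub_eq_zero]
    · have e1 : (s a * v) ⊗ₜ[k] w = (s a ⊗ₜ[k] (1 : U)) * (v ⊗ₜ[k] w) := by
        rw [Algebra.TensorProduct.tmul_mul_tmul, one_mul]
      rw [t3_rel1' k A U s t B H, e1, mul_assoc]
    · have e2 : (t a * v) ⊗ₜ[k] w = (t a ⊗ₜ[k] (1 : U)) * (v ⊗ₜ[k] w) := by
        rw [Algebra.TensorProduct.tmul_mul_tmul, one_mul]
      have e3 : v ⊗ₜ[k] (s a * w) = ((1 : U) ⊗ₜ[k] s a) * (v ⊗ₜ[k] w) := by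
        rw [Algebra.TensorProduct.tmul_mul_tmul, one_mul]
      rw [e2, e3, mul_assoc, mul_assoc, t3_rel2' k A U s t B H])

private lemma mul23_eq (ω : U ⊗[k] U) (x : U) (η : U ⊗[k] U) :
    mul23 k A U s t B H ω (π3 k A U s t (x ⊗ₜ[k] η)) =
      π3 k A U s t (x ⊗ₜ[k] (η * ω)) := by
  simp only [mul23, π3, Submodule.mkQ_apply, Submodule.liftQ_apply, LinearMap.comp_apply,
    LinearMap.lTensor_tmul, LinearMap.flip_apply, LinearMap.mul_apply']

/-- `mul23` bundled as a linear map in `ω`. -/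
def mulT23 : (U ⊗[k] U) →ₗ[k] T3 k A U s t →ₗ[k] T3 k A U s t where
  toFun := mul23 k A U s t B H
  map_add' := fun ω₁ ω₂ => ext_T3 k A U s t fun x v w => by
    rw [mul23_eq k A U s t B H, LinearMap.add_apply, mul23_eq k A U s t B H,
      mul23_eq k A U s t B H, mul_add, tmul_add, map_add]
  map_smul' := fun c ω => ext_T3 k A U s t fun x v w => by
    rw [RingHom.id_apply, mul23_eq k A U s t B H, LinearMap.smul_apply,
      mul23_eq k A U s t B H, mul_smul_comm, tmul_smul, map_smul]

private lemma mulT23_apply (ω : U ⊗[k] U) (ξ : T3 k A U s t) :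
    mulT23 k A U s t B H ω ξ = mul23 k A U s t B H ω ξ := rfl

/-- `J : T2 → T3`, `c ⊗ d ↦ c ⊗ d ⊗ 1`. -/
def Jmap : T2 k A U s t →ₗ[k] T3 k A U s t :=
  Submodule.liftQ _
    ((π3 k A U s t) ∘ₗ LinearMap.lTensor U ((TensorProduct.mk k U U).flip 1)) (by
    refine Submodule.span_le.2 ?_
    rintro x ⟨a, p, q, rfl⟩
    simp only [SetLike.mem_coe, LinearMap.mem_ker, map_sub, LinearMap.comp_apply,
      LinearMap.lTensor_tmul, LinearMap.flip_apply, TensorProduct.mk_apply]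
    rw [sub_eq_zero, t3_rel1 k A U s t])

private lemma Jmap_eq (p q : U) :
    Jmap k A U s t (π2 k A U s t (p ⊗ₜ[k] q)) =
      π3 k A U s t (p ⊗ₜ[k] (q ⊗ₜ[k] 1)) := by
  simp only [Jmap, π2, Submodule.mkQ_apply, Submodule.liftQ_apply, LinearMap.comp_apply,
    LinearMap.lTensor_tmul, LinearMap.flip_apply, TensorProduct.mk_apply]
  rfl

/-- `β₁₂ : ZQ → T3`, `x ⊗ v ⊗ w ↦ x₍₁₎ ⊗ x₍₂₎ v ⊗ w`. -/
def β12 : ZQ k A U s t →ₗ[k] T3 k A U s t :=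
  Submodule.liftQ _ (TensorProduct.lift ((h₂map k A U s t) ∘ₗ B.Δ)) (by
    refine Submodule.span_le.2 ?_
    rintro x (⟨a, u, v, w, rfl⟩ | ⟨a, u, v, w, rfl⟩) <;>
      simp only [SetLike.mem_coe, LinearMap.mem_ker, map_sub, TensorProduct.lift.tmul,
        LinearMap.comp_apply] <;> rw [sub_eq_zero]
    · have h1 := LinearMap.congr_fun (h₂_lmulSnd k A U s t B H a v w) (B.Δ u)
      rw [LinearMap.comp_apply, LinearMap.flip_apply, LinearMap.flip_apply] at h1
      rw [delta_t_mul k A U s t B H, h1]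
    · have h1 := LinearMap.congr_fun (h₂_mulSnd k A U s t B H (t a) v w) (B.Δ u)
      rw [LinearMap.comp_apply, LinearMap.flip_apply, LinearMap.flip_apply] at h1
      rw [delta_mul_t k A U s t B H, h1])

private lemma β12_eq (x v w : U) :
    β12 k A U s t B H (πZ k A U s t (x ⊗ₜ[k] (v ⊗ₜ[k] w))) =
      h₂map k A U s t (B.Δ x) (v ⊗ₜ[k] w) := by
  simp only [β12, πZ, Submodule.mkQ_apply, Submodule.liftQ_apply,
    TensorProduct.lift.tmul, LinearMap.comp_apply]
  rfl

/-- `W : T3 → ZQ`, `x ⊗ v ⊗ w ↦ x₊ ⊗ x₋ v ⊗ w`. -/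
def Wmap : T3 k A U s t →ₗ[k] ZQ k A U s t :=
  Submodule.liftQ _
    (TensorProduct.lift ((g₂map k A U s t) ∘ₗ eTmap k A U s t B H)) (by
    refine Submodule.span_le.2 ?_
    rintro x (⟨a, u, v, w, rfl⟩ | ⟨a, u, v, w, rfl⟩) <;>
      simp only [SetLike.mem_coe, LinearMap.mem_ker, map_sub, TensorProduct.lift.tmul,
        LinearMap.comp_apply] <;> rw [sub_eq_zero]
    · have h1 := LinearMap.congr_fun (g₂_mulSndOp k A U s t B H (s a) v w)
        (eTmap k A U s t B H u)
      rw [LinearMap.comp_apply, LinearMap.flip_apply, LinearMap.flip_apply] at h1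
      rw [eT_t_mul k A U s t B H, h1]
    · have h1 := LinearMap.congr_fun (g₂_mulSndOp k A U s t B H (t a) v w)
        (eTmap k A U s t B H u)
      have h2 := LinearMap.congr_fun (g₂_oMap k A U s t B H a v w)
        (eTmap k A U s t B H u)
      rw [LinearMap.comp_apply, LinearMap.flip_apply, LinearMap.flip_apply] at h1 h2
      rw [← h1, ← eT_oMap k A U s t B H, h2])

private lemma Wmap_eq (x v w : U) :
    Wmap k A U s t B H (π3 k A U s t (x ⊗ₜ[k] (v ⊗ₜ[k] w))) =
      g₂map k A U s t (eTmap k A U s t B H x) (v ⊗ₜ[k] w) := by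
  simp only [Wmap, π3, Submodule.mkQ_apply, Submodule.liftQ_apply,
    TensorProduct.lift.tmul, LinearMap.comp_apply]
  rfl

private lemma W_beta12 : Wmap k A U s t B H ∘ₗ β12 k A U s t B H = LinearMap.id := by
  refine ext_Z k A U s t fun x v w => ?_
  have key : Wmap k A U s t B H ∘ₗ ((h₂map k A U s t).flip (v ⊗ₜ[k] w)) =
      ((g₂map k A U s t).flip (v ⊗ₜ[k] w)) ∘ₗ H.βinv := by
    refine ext_T2 k A U s t fun p q => ?_
    rw [LinearMap.comp_apply, LinearMap.flip_apply, h₂map_eq, Wmap_eq,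
      LinearMap.comp_apply, LinearMap.flip_apply, betaInv_pi2 k A U s t B H,
      ← eTmap_apply k A U s t B H]
    have h1 := LinearMap.congr_fun (g₂_mulSndOp k A U s t B H q v w)
      (eTmap k A U s t B H p)
    rw [LinearMap.comp_apply, LinearMap.flip_apply, LinearMap.flip_apply] at h1
    rw [h1]
  have h2 := LinearMap.congr_fun key (B.Δ x)
  rw [LinearMap.comp_apply, LinearMap.flip_apply, LinearMap.comp_apply,
    LinearMap.flip_apply, beta_inv_delta k A U s t B H, g₂map_eq, one_mul] at h2
  rw [LinearMap.comp_apply, LinearMap.id_apply, β12_eq, h2]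


/-! #### Key computational identities -/

private lemma S1 (ω : U ⊗[k] U) (v d w : U) :
    mulT23 k A U s t B H (v ⊗ₜ[k] w)
        (π3 k A U s t ((LinearMap.lTensor U ((TensorProduct.mk k U U).flip d)) ω)) =
      h₂map k A U s t (π2 k A U s t ω) (v ⊗ₜ[k] (d * w)) := by
  induction ω using TensorProduct.induction_on with
  | zero => simp
  | tmul c e =>
    rw [LinearMap.lTensor_tmul, LinearMap.flip_apply, TensorProduct.mk_apply,
      mulT23_apply k A U s t B H, mul23_eq k A U s t B H,
      Algebra.TensorProduct.tmul_mul_tmul, h₂map_eq]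
  | add ω₁ ω₂ h₁ h₂ => simp only [map_add, LinearMap.add_apply, h₁, h₂]

private lemma C1d (y : U) (ωy : U ⊗[k] U) (hωy : π2 k A U s t ωy = B.Δ y) :
    B.ΔR ∘ₗ H.mulSnd y = mulT23 k A U s t B H ωy ∘ₗ B.ΔR := by
  refine ext_T2 k A U s t fun c d => ?_
  obtain ⟨ωd, hωd⟩ := Submodule.mkQ_surjective (bgdRel k A U s t) (B.Δ d)
  have hπd : π2 k A U s t ωd = B.Δ d := hωd
  have hmul : π2 k A U s t (ωd * ωy) = B.Δ (d * y) := by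
    rw [B.Δ_mul d y ωy hωy, ← hπd, mulT_pi2 k A U s t B H]
  rw [LinearMap.comp_apply, LinearMap.comp_apply, H.mulSnd_eq,
    B.ΔR_eq c (d * y) (ωd * ωy) hmul, B.ΔR_eq c d ωd hπd, LinearMap.comp_apply,
    LinearMap.comp_apply, TensorProduct.mk_apply, TensorProduct.mk_apply,
    mulT23_apply k A U s t B H, mul23_eq k A U s t B H]

private lemma C1a (v w : U) :
    β12 k A U s t B H ∘ₗ ((hmap k A U s t).flip (v ⊗ₜ[k] w)) =
      mulT23 k A U s t B H (v ⊗ₜ[k] w) ∘ₗ B.ΔL := by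
  refine ext_T2 k A U s t fun p q => ?_
  obtain ⟨ωp, hωp⟩ := Submodule.mkQ_surjective (bgdRel k A U s t) (B.Δ p)
  have hπp : π2 k A U s t ωp = B.Δ p := hωp
  rw [LinearMap.comp_apply, LinearMap.flip_apply, hmap_eq, β12_eq,
    LinearMap.comp_apply, B.ΔL_eq p q ωp hπp, LinearMap.comp_apply,
    S1 k A U s t B H, hπp]

/-- `Θ₂ y : T2 → T3`, `c ⊗ d ↦ c₍₁₎ ⊗ c₍₂₎ y ⊗ d`. -/
def Θ₂ (y : U) : T2 k A U s t →ₗ[k] T3 k A U s t :=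
  Submodule.liftQ _
    (TensorProduct.lift
      (LinearMap.compl₂ ((h₂map k A U s t) ∘ₗ B.Δ) (TensorProduct.mk k U U y))) (by
    refine Submodule.span_le.2 ?_
    rintro x ⟨a, c, d, rfl⟩
    simp only [SetLike.mem_coe, LinearMap.mem_ker, map_sub, TensorProduct.lift.tmul,
      LinearMap.compl₂_apply, LinearMap.comp_apply, TensorProduct.mk_apply]
    rw [sub_eq_zero]
    have h1 := LinearMap.congr_fun (h₂_lmulSnd k A U s t B H a y d) (B.Δ c)
    rw [LinearMap.comp_apply, LinearMap.flip_apply, LinearMap.flip_apply] at h1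
    rw [delta_t_mul k A U s t B H, h1])

private lemma Θ₂_eq (y c d : U) :
    Θ₂ k A U s t B H y (π2 k A U s t (c ⊗ₜ[k] d)) =
      h₂map k A U s t (B.Δ c) (y ⊗ₜ[k] d) := by
  simp only [Θ₂, π2, Submodule.mkQ_apply, Submodule.liftQ_apply,
    TensorProduct.lift.tmul, LinearMap.compl₂_apply, LinearMap.comp_apply,
    TensorProduct.mk_apply]
  rfl

private lemma Θ₂_mulSnd (y q : U) :
    Θ₂ k A U s t B H y ∘ₗ H.mulSnd q =
      mulT23 k A U s t B H (y ⊗ₜ[k] q) ∘ₗ B.ΔL := by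
  refine ext_T2 k A U s t fun c d => ?_
  obtain ⟨ωc, hωc⟩ := Submodule.mkQ_surjective (bgdRel k A U s t) (B.Δ c)
  have hπc : π2 k A U s t ωc = B.Δ c := hωc
  try simp only [LinearMap.comp_apply]
  rw [H.mulSnd_eq, Θ₂_eq k A U s t B H, B.ΔL_eq c d ωc hπc, LinearMap.comp_apply,
    S1 k A U s t B H, hπc]

private lemma J_mulSnd (y : U) :
    Jmap k A U s t ∘ₗ H.mulSnd y = (h₂map k A U s t).flip (y ⊗ₜ[k] (1 : U)) := by
  refine ext_T2 k A U s t fun c d => ?_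
  try simp only [LinearMap.comp_apply]
  rw [H.mulSnd_eq, Jmap_eq k A U s t B H, LinearMap.flip_apply, h₂map_eq]

private lemma C1 (F : U →ₗ[k] T2 k A U s t →ₗ[k] TMix k A U s t)
    (hF : ∀ x p q : U,
      F x (π2 k A U s t (p ⊗ₜ[k] q)) = πMix k A U s t (x ⊗ₜ[k] (p ⊗ₜ[k] q)))
    (Ψ : TOp k A U t →ₗ[k] TMix k A U s t)
    (hΨ : ∀ x y : U, Ψ (πOp k A U t (x ⊗ₜ[k] y)) = F x (B.Δ y)) :
    β12 k A U s t B H ∘ₗ θmap k A U s t B H ∘ₗ Ψ = B.ΔR ∘ₗ H.β := by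
  refine ext_TOp k A U t fun x y => ?_
  try simp only [LinearMap.comp_apply]
  rw [hΨ x y, H.β_eq]
  obtain ⟨ωy, hωy⟩ := Submodule.mkQ_surjective (bgdRel k A U s t) (B.Δ y)
  have hπy : π2 k A U s t ωy = B.Δ y := hωy
  have hmain : (β12 k A U s t B H ∘ₗ θmap k A U s t B H ∘ₗ (F x)) ∘ₗ (π2 k A U s t) =
      (mulT23 k A U s t B H).flip (B.ΔR (B.Δ x)) := by
    refine TensorProduct.ext' fun v w => ?_
    simp only [LinearMap.comp_apply, LinearMap.flip_apply]
    rw [hF x v w, θmap_eq k A U s t B H]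
    have h1 := LinearMap.congr_fun (C1a k A U s t B H v w) (B.Δ x)
    simp only [LinearMap.comp_apply, LinearMap.flip_apply] at h1
    rw [h1, B.coassoc]
  have h2 := LinearMap.congr_fun hmain ωy
  simp only [LinearMap.comp_apply, LinearMap.flip_apply] at h2
  rw [hπy] at h2
  have h3 := LinearMap.congr_fun (C1d k A U s t B H y ωy hπy) (B.Δ x)
  simp only [LinearMap.comp_apply] at h3
  rw [h2, h3]

private lemma C2a (G : TOp k A U t →ₗ[k] U →ₗ[k] TMix k A U s t)
    (hG : ∀ p q y : U,
      G (πOp k A U t (p ⊗ₜ[k] q)) y = πMix k A U s t (p ⊗ₜ[k] (y ⊗ₜ[k] q)))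
    (y : U) :
    β12 k A U s t B H ∘ₗ θmap k A U s t B H ∘ₗ (G.flip y) =
      Θ₂ k A U s t B H y ∘ₗ H.β := by
  refine ext_TOp k A U t fun p q => ?_
  try simp only [LinearMap.comp_apply, LinearMap.flip_apply]
  rw [hG p q y, θmap_eq k A U s t B H, H.β_eq]
  have h1 := LinearMap.congr_fun (C1a k A U s t B H y q) (B.Δ p)
  simp only [LinearMap.comp_apply, LinearMap.flip_apply] at h1
  have h2 := LinearMap.congr_fun (Θ₂_mulSnd k A U s t B H y q) (B.Δ p)
  simp only [LinearMap.comp_apply] at h2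
  rw [h1, h2]

private lemma C2 (G : TOp k A U t →ₗ[k] U →ₗ[k] TMix k A U s t)
    (hG : ∀ p q y : U,
      G (πOp k A U t (p ⊗ₜ[k] q)) y = πMix k A U s t (p ⊗ₜ[k] (y ⊗ₜ[k] q)))
    (Φ : TOp k A U t →ₗ[k] TMix k A U s t)
    (hΦ : ∀ x y : U,
      Φ (πOp k A U t (x ⊗ₜ[k] y)) = G (H.βinv (π2 k A U s t (x ⊗ₜ[k] 1))) y) :
    β12 k A U s t B H ∘ₗ θmap k A U s t B H ∘ₗ Φ = Jmap k A U s t ∘ₗ H.β := by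
  refine ext_TOp k A U t fun x y => ?_
  try simp only [LinearMap.comp_apply]
  rw [hΦ x y, H.β_eq, ← eTmap_apply k A U s t B H]
  have h1 := LinearMap.congr_fun (C2a k A U s t B H G hG y) (eTmap k A U s t B H x)
  simp only [LinearMap.comp_apply, LinearMap.flip_apply] at h1
  rw [beta_eT k A U s t B H] at h1
  have h2 := LinearMap.congr_fun (J_mulSnd k A U s t B H y) (B.Δ x)
  simp only [LinearMap.comp_apply, LinearMap.flip_apply] at h2
  rw [h1, h2, Θ₂_eq k A U s t B H]

/-- The main statement, proved abstractly. -/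
private lemma mainAux (F : U →ₗ[k] T2 k A U s t →ₗ[k] TMix k A U s t)
    (hF : ∀ x p q : U,
      F x (π2 k A U s t (p ⊗ₜ[k] q)) = πMix k A U s t (x ⊗ₜ[k] (p ⊗ₜ[k] q)))
    (G : TOp k A U t →ₗ[k] U →ₗ[k] TMix k A U s t)
    (hG : ∀ p q y : U,
      G (πOp k A U t (p ⊗ₜ[k] q)) y = πMix k A U s t (p ⊗ₜ[k] (y ⊗ₜ[k] q)))
    (Ψ : TOp k A U t →ₗ[k] TMix k A U s t)
    (hΨ : ∀ x y : U, Ψ (πOp k A U t (x ⊗ₜ[k] y)) = F x (B.Δ y))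
    (Φ : TOp k A U t →ₗ[k] TMix k A U s t)
    (hΦ : ∀ x y : U,
      Φ (πOp k A U t (x ⊗ₜ[k] y)) = G (H.βinv (π2 k A U s t (x ⊗ₜ[k] 1))) y)
    (u : U) :
    Ψ (H.βinv (π2 k A U s t (u ⊗ₜ[k] 1))) = Φ (H.βinv (π2 k A U s t (u ⊗ₜ[k] 1))) := by
  set e := H.βinv (π2 k A U s t (u ⊗ₜ[k] 1)) with he
  have hβe : H.β e = π2 k A U s t (u ⊗ₜ[k] 1) := by
    have h := LinearMap.congr_fun H.β_right_inv (π2 k A U s t (u ⊗ₜ[k] 1))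
    rw [LinearMap.comp_apply, LinearMap.id_apply] at h
    exact h
  have h3 : B.ΔR (π2 k A U s t (u ⊗ₜ[k] 1)) =
      π3 k A U s t (u ⊗ₜ[k] ((1 : U) ⊗ₜ[k] (1 : U))) := by
    rw [B.ΔR_eq u 1 ((1 : U) ⊗ₜ[k] (1 : U)) B.Δ_one.symm, LinearMap.comp_apply,
      TensorProduct.mk_apply]
  have h4 : Jmap k A U s t (π2 k A U s t (u ⊗ₜ[k] 1)) =
      π3 k A U s t (u ⊗ₜ[k] ((1 : U) ⊗ₜ[k] (1 : U))) := Jmap_eq k A U s t B H u 1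
  have key : β12 k A U s t B H (θmap k A U s t B H (Ψ e)) =
      β12 k A U s t B H (θmap k A U s t B H (Φ e)) := by
    have l := LinearMap.congr_fun (C1 k A U s t B H F hF Ψ hΨ) e
    have r := LinearMap.congr_fun (C2 k A U s t B H G hG Φ hΦ) e
    simp only [LinearMap.comp_apply] at l r
    rw [hβe] at l r
    rw [l, r, h3, h4]
  have hfull : ∀ ξ : TMix k A U s t,
      θ'map k A U s t B H (Wmap k A U s t B H (β12 k A U s t B H
        (θmap k A U s t B H ξ))) = ξ := by
    intro ξ
    have h1 := LinearMap.congr_fun (W_beta12 k A U s t B H) (θmap k A U s t B H ξ)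
    rw [LinearMap.comp_apply, LinearMap.id_apply] at h1
    have h2 := LinearMap.congr_fun (theta'_theta k A U s t B H) ξ
    rw [LinearMap.comp_apply, LinearMap.id_apply] at h2
    rw [h1, h2]
  calc Ψ e = θ'map k A U s t B H (Wmap k A U s t B H (β12 k A U s t B H
        (θmap k A U s t B H (Ψ e)))) := (hfull _).symm
    _ = θ'map k A U s t B H (Wmap k A U s t B H (β12 k A U s t B H
        (θmap k A U s t B H (Φ e)))) := by rw [key]
    _ = Φ e := hfull _

end

end Aux
theorem translation_coproduct_exchange
    (s t : A →ₗ[k] U)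
    (B : LeftBialgebroid k A U s t) (H : LeftHopfAlgebroid k A U s t B)
    (F : U →ₗ[k] T2 k A U s t →ₗ[k] TMix k A U s t)
    (hF : ∀ x p q : U,
      F x (π2 k A U s t (p ⊗ₜ[k] q)) = πMix k A U s t (x ⊗ₜ[k] (p ⊗ₜ[k] q)))
    (G : TOp k A U t →ₗ[k] U →ₗ[k] TMix k A U s t)
    (hG : ∀ p q y : U,
      G (πOp k A U t (p ⊗ₜ[k] q)) y = πMix k A U s t (p ⊗ₜ[k] (y ⊗ₜ[k] q)))
    (Ψ : TOp k A U t →ₗ[k] TMix k A U s t)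
    (hΨ : ∀ x y : U, Ψ (πOp k A U t (x ⊗ₜ[k] y)) = F x (B.Δ y))
    (Φ : TOp k A U t →ₗ[k] TMix k A U s t)
    (hΦ : ∀ x y : U,
      Φ (πOp k A U t (x ⊗ₜ[k] y)) = G (H.βinv (π2 k A U s t (x ⊗ₜ[k] 1))) y) :
    ∀ u : U,
      Ψ (H.βinv (π2 k A U s t (u ⊗ₜ[k] 1))) = Φ (H.βinv (π2 k A U s t (u ⊗ₜ[k] 1))) := by
  intro u
  exact mainAux k A U s t B H F hF G hG Ψ hΨ Φ hΦ u

end Stmt18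
end
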